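/- arXiv:2405.17174 — 2 statements merged into one kernel-verified Lean document; each statement's English description precedes it below -/
import Mathlib

section
/- Let μ be a dominant integral coweight, and let λ be an integral coweight such that μ − u(λ) is a ℤ_{≥0}-linear combination of positive coroots for every u ∈ W₀. Let λ_d be the dominant element of the orbit W₀λ, write λ = w''(λ_d) with w'' ∈ W₀ the minimal coset representative for λ_d, and set ℓ^{λ_d}(w'') := Σ_{α ∈ Φ⁺ with w''(α) ∈ −Φ⁺} ⟨α, λ_d⟩ and ht(μ − λ_d) := ⟨ρ, μ − λ_d⟩. Then ⟨ρ, μ + λ⟩ = ℓ(t_μ) − ht(μ − λ_d) − ℓ^{λ_d}(w'') = ht(μ − λ_d) + N_{λ_d,w''}, where ℓ(t_μ) is the number of pairs (α, n) ∈ Φ⁺ × ℤ with H_{α,n} separating A and A + μ, and N_{λ_d,w''} is the number of pairs (α, n) ∈ Φ⁺ × ℤ with H_{α,n} separating C and x_{w''}(A), with x_{w''} := t_{−w''(λ_d)}w''. Furthermore, for every minimal coset representative w ∈ W₀ for μ, ℓ(x_w) − ⟨ρ, μ + λ⟩ = ht(μ − λ_d) + ℓ^{λ_d}(w'') − ℓ(w),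 where x_w := t_{−w(μ)}w. -/
/-!
Common framework: a finite crystallographic reduced root system `Φ` inside the dual
of a finite-dimensional real vector space `V`, with a choice of positive roots `Pos`,
simple roots `Delta`, coroots, and the finite Weyl group `W` (a subgroup of linear
automorphisms of `V` generated by the root reflections).  We also set up affine
hyperplanes, the fundamental alcove, separation counts, and alcove walks.
-/

open Module Finset

section BasicDefs

variable {V : Type*} [AddCommGroup V] [Module ℝ V]

/-- The affine transformation `t_ν u : v ↦ u(v) + ν`. -/
def affT (ν : V) (u : V ≃ₗ[ℝ] V) : V → V := fun v => u v + ν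

/-- The affine hyperplane `H_{α,n} = {v : ⟨α, v⟩ = n}`. -/
def affHyp (α : Dual ℝ V) (n : ℤ) : Set V := {v | α v = (n : ℝ)}

/-- `H_{α,n}` separates `S` and `T`: the affine functional `⟨α, ·⟩ - n` is strictly
positive everywhere on one of the two sets and strictly negative everywhere on the other. -/
def SepBy (α : Dual ℝ V) (n : ℤ) (S T : Set V) : Prop :=
  ((∀ v ∈ S, α v < (n : ℝ)) ∧ ∀ v ∈ T, (n : ℝ) < α v) ∨
  ((∀ v ∈ S, (n : ℝ) < α v) ∧ ∀ v ∈ T, α v < (n : ℝ))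

/-- The contragredient action of `w` on `V*`:  `(w · α)(v) = α (w⁻¹ v)`. -/
def dAct (w : V ≃ₗ[ℝ] V) (α : Dual ℝ V) : Dual ℝ V := α.comp w.symm.toLinearMap

end BasicDefs

/-- A finite crystallographic reduced root system spanning the dual of `V`, together
with a system of positive roots, the simple roots, the coroots and the Weyl group. -/
structure RootSystemCtx (V : Type*) [AddCommGroup V] [Module ℝ V]
    [FiniteDimensional ℝ V] where
  Φ : Finset (Dual ℝ V)
  Pos : Finset (Dual ℝ V)
  Delta : Finset (Dual ℝ V)
  coroot : Dual ℝ V → V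
  W : Subgroup (V ≃ₗ[ℝ] V)
  pos_subset : Pos ⊆ Φ
  delta_subset : Delta ⊆ Pos
  root_ne_zero : ∀ α ∈ Φ, α ≠ 0
  span_eq_top : Submodule.span ℝ (Φ : Set (Dual ℝ V)) = ⊤
  pos_partition : ∀ α ∈ Φ, (α ∈ Pos ∧ -α ∉ Pos) ∨ (-α ∈ Pos ∧ α ∉ Pos)
  coroot_self : ∀ α ∈ Φ, α (coroot α) = 2
  crystallographic : ∀ α ∈ Φ, ∀ β ∈ Φ, ∃ n : ℤ, β (coroot α) = (n : ℝ)
  reduced : ∀ α ∈ Φ, ∀ c : ℝ, c • α ∈ Φ → c = 1 ∨ c = -1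
  root_reflect_mem : ∀ α ∈ Φ, ∀ β ∈ Φ, β - β (coroot α) • α ∈ Φ
  delta_indep : LinearIndependent ℝ (fun x : {a : Dual ℝ V // a ∈ Delta} => x.1)
  pos_of_delta : ∀ α ∈ Pos, ∃ c : Dual ℝ V → ℕ, α = ∑ β ∈ Delta, (c β : ℝ) • β
  W_gen : W = Subgroup.closure
    {g : V ≃ₗ[ℝ] V | ∃ α ∈ Φ, ∀ v : V, g v = v - α v • coroot α}

namespace RootSystemCtx

variable {V : Type*} [AddCommGroup V] [Module ℝ V] [FiniteDimensional ℝ V]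

section CtxDefs

variable (C : RootSystemCtx V)

/-- `ρ`, the half sum of the positive roots. -/
noncomputable def rho : Dual ℝ V := (2⁻¹ : ℝ) • ∑ α ∈ C.Pos, α

open Classical in
/-- The inversion set `{α ∈ Φ⁺ : w(α) ∈ -Φ⁺}` of `w`. -/
noncomputable def invSet (w : V ≃ₗ[ℝ] V) : Finset (Dual ℝ V) :=
  C.Pos.filter fun α => -(dAct w α) ∈ C.Pos

/-- The length `ℓ(w) = #{α ∈ Φ⁺ : w(α) ∈ -Φ⁺}`. -/
noncomputable def len (w : V ≃ₗ[ℝ] V) : ℕ := (C.invSet w).card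

/-- `lam` is an integral coweight: `⟨α, lam⟩ ∈ ℤ` for all roots `α`. -/
def IsIntegral (lam : V) : Prop := ∀ α ∈ C.Φ, ∃ n : ℤ, α lam = (n : ℝ)

/-- `lam` is dominant: `⟨α, lam⟩ ≥ 0` for all positive roots `α`. -/
def IsDominant (lam : V) : Prop := ∀ α ∈ C.Pos, 0 ≤ α lam

/-- `w` is a minimal(-length) coset representative for `lam`, i.e. `w ∈ W₀` and
`ℓ(w) ≤ ℓ(v)` for every `v ∈ w W_{0,lam}`. -/
def IsMinRep (w : V ≃ₗ[ℝ] V) (lam : V) : Prop :=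
  w ∈ C.W ∧ ∀ u ∈ C.W, u lam = lam → C.len w ≤ C.len (w * u)

/-- The (open) fundamental alcove `A`. -/
def alcove : Set V := {v | ∀ α ∈ C.Pos, 0 < α v ∧ α v < 1}

/-- The closure of the fundamental alcove. -/
def closedAlcove : Set V := {v | ∀ α ∈ C.Pos, 0 ≤ α v ∧ α v ≤ 1}

/-- The open dominant Weyl chamber `C`. -/
def chamber : Set V := {v | ∀ α ∈ C.Pos, 0 < α v}

/-- The number of affine hyperplanes `H_{α,n}` (`α ∈ Φ⁺`, `n ∈ ℤ`) separating `S` and `T`. -/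
noncomputable def sepCount (S T : Set V) : ℕ :=
  Set.ncard {p : Dual ℝ V × ℤ | p.1 ∈ C.Pos ∧ SepBy p.1 p.2 S T}

/-- The length of an affine transformation: the number of affine hyperplanes
separating `A` and `f(A)`. -/
noncomputable def affLen (f : V → V) : ℕ := C.sepCount C.alcove (f '' C.alcove)

/-- The coroot lattice `Q^∨`. -/
def Qv : AddSubgroup V := AddSubgroup.closure (C.coroot '' (C.Φ : Set (Dual ℝ V)))

/-- `b` is an alcove: a transform of the fundamental alcove under the affine Weyl
group `Q^∨ ⋊ W₀`. -/
def IsAlcoveSet (b : Set V) : Prop := ∃ ν ∈ C.Qv, ∃ u ∈ C.W, b = affT ν u '' C.alcove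

/-- The affine reflection through the hyperplane `H_{α,n}`. -/
def reflH (α : Dual ℝ V) (n : ℤ) : V → V := fun v => v - (α v - (n : ℝ)) • C.coroot α

/-- `H_{α,n}` (with `α ∈ Φ⁺`) supports a codimension-one face of the alcove `b`:
it is the unique affine hyperplane separating `b` from its reflection through `H_{α,n}`. -/
def IsWall (α : Dual ℝ V) (n : ℤ) (b : Set V) : Prop :=
  α ∈ C.Pos ∧ SepBy α n b (C.reflH α n '' b) ∧
    ∀ β ∈ C.Pos, ∀ m : ℤ, SepBy β m b (C.reflH α n '' b) → β = α ∧ m = n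

open Classical in
/-- `Φ_M = Φ ∩ ℤΔ_M`, the roots of the Levi attached to `Δ_M ⊆ Δ`. -/
noncomputable def PhiM (ΔM : Finset (Dual ℝ V)) : Finset (Dual ℝ V) :=
  C.Φ.filter fun α => α ∈ Submodule.span ℤ (ΔM : Set (Dual ℝ V))

/-- `W_{0,M}`, the subgroup of `W₀` generated by the reflections in the roots of `Φ_M`. -/
def WM (ΔM : Finset (Dual ℝ V)) : Subgroup (V ≃ₗ[ℝ] V) :=
  Subgroup.closure {g : V ≃ₗ[ℝ] V | ∃ α ∈ C.PhiM ΔM, ∀ v : V, g v = v - α v • C.coroot α}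

/-- `lam` is `M`-dominant: `⟨β, lam⟩ ≥ 0` for every `β ∈ Φ_M⁺ = Φ_M ∩ Φ⁺`. -/
def IsMDominant (ΔM : Finset (Dual ℝ V)) (lam : V) : Prop :=
  ∀ β, β ∈ C.PhiM ΔM → β ∈ C.Pos → 0 ≤ β lam

end CtxDefs

/-- An alcove walk of length `len`, starting at the fundamental alcove: at each step
`i < len` we are given a wall `H_{root i, lev i}` of the alcove `alc i`, and
`alc (i+1)` is either `alc i` (a folding) or its reflection through that wall (a crossing). -/
structure Walk (C : RootSystemCtx V) where
  len : ℕ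
  alc : ℕ → Set V
  root : ℕ → Dual ℝ V
  lev : ℕ → ℤ
  start : alc 0 = C.alcove
  isAlcove : ∀ i ≤ len, C.IsAlcoveSet (alc i)
  wall : ∀ i < len, C.IsWall (root i) (lev i) (alc i)
  step : ∀ i < len, alc (i + 1) = alc i ∨ alc (i + 1) = C.reflH (root i) (lev i) '' alc i

namespace Walk

variable {C : RootSystemCtx V}

/-- Step `i` is a folding. -/
def IsFolding (Wk : Walk C) (i : ℕ) : Prop := Wk.alc (i + 1) = Wk.alc i

/-- Step `i` is a crossing. -/
def IsCrossing (Wk : Walk C) (i : ℕ) : Prop := Wk.alc (i + 1) ≠ Wk.alc i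

/-- The affine functional of step `i` is positive on the current alcove
(positivity for the dominant orientation). -/
def PosAt (Wk : Walk C) (i : ℕ) : Prop := ∀ v ∈ Wk.alc i, (Wk.lev i : ℝ) < Wk.root i v

/-- The affine functional of step `i` is negative on the current alcove. -/
def NegAt (Wk : Walk C) (i : ℕ) : Prop := ∀ v ∈ Wk.alc i, Wk.root i v < (Wk.lev i : ℝ)

open Classical in
/-- `c⁺`: the number of crossings positive for the dominant orientation. -/
noncomputable def cPlus (Wk : Walk C) : ℕ :=
  ((Finset.range Wk.len).filter fun i => Wk.IsCrossing i ∧ Wk.PosAt i).card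

open Classical in
/-- `f⁺`: the number of foldings. -/
noncomputable def fPlus (Wk : Walk C) : ℕ :=
  ((Finset.range Wk.len).filter fun i => Wk.IsFolding i).card

/-- Positively folded for the dominant orientation. -/
def PosFolded (Wk : Walk C) : Prop := ∀ i < Wk.len, Wk.IsFolding i → Wk.NegAt i

/-- Positivity of step `i` for the parabolic orientation attached to the Levi root
set `ΦM`: for `α ∉ Φ_M` positivity on the current alcove; for `α ∈ Φ_M` the sign on
the current alcove agrees with the sign on the fundamental alcove. -/
def PosAtP (Wk : Walk C) (ΦM : Finset (Dual ℝ V)) (i : ℕ) : Prop :=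
  (Wk.root i ∉ ΦM ∧ Wk.PosAt i) ∨
  (Wk.root i ∈ ΦM ∧
    ((Wk.PosAt i ∧ ∀ v ∈ C.alcove, (Wk.lev i : ℝ) < Wk.root i v) ∨
     (Wk.NegAt i ∧ ∀ v ∈ C.alcove, Wk.root i v < (Wk.lev i : ℝ))))

/-- Negativity of step `i` for the parabolic orientation attached to `ΦM`. -/
def NegAtP (Wk : Walk C) (ΦM : Finset (Dual ℝ V)) (i : ℕ) : Prop :=
  (Wk.root i ∉ ΦM ∧ Wk.NegAt i) ∨
  (Wk.root i ∈ ΦM ∧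
    ((Wk.PosAt i ∧ ∀ v ∈ C.alcove, Wk.root i v < (Wk.lev i : ℝ)) ∨
     (Wk.NegAt i ∧ ∀ v ∈ C.alcove, (Wk.lev i : ℝ) < Wk.root i v)))

open Classical in
/-- `c⁺` for the parabolic orientation attached to `ΦM`. -/
noncomputable def cPlusP (Wk : Walk C) (ΦM : Finset (Dual ℝ V)) : ℕ :=
  ((Finset.range Wk.len).filter fun i => Wk.IsCrossing i ∧ Wk.PosAtP ΦM i).card

/-- Positively folded for the parabolic orientation attached to `ΦM`. -/
def PosFoldedP (Wk : Walk C) (ΦM : Finset (Dual ℝ V)) : Prop :=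
  ∀ i < Wk.len, Wk.IsFolding i → Wk.NegAtP ΦM i

/-- A minimal gallery from the fundamental alcove to `b`: all steps are crossings,
it ends at `b`, and its length is the number of hyperplanes separating `A` and `b`. -/
def IsMinGallery (Wk : Walk C) (b : Set V) : Prop :=
  (∀ i < Wk.len, Wk.IsCrossing i) ∧ Wk.alc Wk.len = b ∧
    Wk.len = C.sepCount C.alcove b

/-- Two walks have the same type: same length and, at each step, the pullbacks of the
crossed/folded hyperplanes to the fundamental alcove coincide. -/
def SameType (Wk G : Walk C) : Prop :=
  Wk.len = G.len ∧ ∀ i < Wk.len,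
    ∃ ν₁ ∈ C.Qv, ∃ u₁ ∈ C.W, ∃ ν₂ ∈ C.Qv, ∃ u₂ ∈ C.W,
      Wk.alc i = affT ν₁ u₁ '' C.alcove ∧ G.alc i = affT ν₂ u₂ '' C.alcove ∧
      affT ν₁ u₁ ⁻¹' affHyp (Wk.root i) (Wk.lev i) =
        affT ν₂ u₂ ⁻¹' affHyp (G.root i) (G.lev i)

/-- The walk terminates at `v₀`: `v₀` lies in the closure of the final alcove. -/
def Terminates (Wk : Walk C) (v₀ : V) : Prop :=
  ∃ ν ∈ C.Qv, ∃ u ∈ C.W, Wk.alc Wk.len = affT ν u '' C.alcove ∧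
    v₀ ∈ affT ν u '' C.closedAlcove

/-- Two walks are equal as walks: same length and identical sequences of alcoves,
roots and levels. -/
def Equiv (Wk Wk' : Walk C) : Prop :=
  Wk.len = Wk'.len ∧ (∀ i ≤ Wk.len, Wk.alc i = Wk'.alc i) ∧
    ∀ i < Wk.len, Wk.root i = Wk'.root i ∧ Wk.lev i = Wk'.lev i

end Walk

end RootSystemCtx

section AuxProofs
set_option linter.unusedSectionVars false

open Module Finset

variable {V : Type*} [AddCommGroup V] [Module ℝ V] [FiniteDimensional ℝ V]

namespace RootSystemCtx

variable (C : RootSystemCtx V)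

lemma pos_or_neg {α : Dual ℝ V} (hα : α ∈ C.Φ) : α ∈ C.Pos ∨ -α ∈ C.Pos := by
  rcases C.pos_partition α hα with ⟨h, _⟩ | ⟨h, _⟩
  · exact Or.inl h
  · exact Or.inr h

lemma not_both_pos {α : Dual ℝ V} (hα : α ∈ C.Φ) : ¬(α ∈ C.Pos ∧ -α ∈ C.Pos) := by
  rcases C.pos_partition α hα with ⟨h1, h2⟩ | ⟨h1, h2⟩ <;> tauto

lemma span_delta : Submodule.span ℝ (C.Delta : Set (Dual ℝ V)) = ⊤ := by
  refine top_unique ?_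
  rw [← C.span_eq_top]
  refine Submodule.span_le.mpr fun α hα => ?_
  have key : ∀ β ∈ C.Pos, β ∈ Submodule.span ℝ (C.Delta : Set (Dual ℝ V)) := by
    intro β hβ
    obtain ⟨c, hc⟩ := C.pos_of_delta β hβ
    rw [hc]
    exact Submodule.sum_mem _ fun γ hγ => Submodule.smul_mem _ _ (Submodule.subset_span hγ)
  rcases C.pos_or_neg hα with h | h
  · exact key α h
  · simpa using Submodule.neg_mem _ (key _ h)

lemma exists_pos_vec : ∃ v₁ : V, ∀ α ∈ C.Pos, 0 < α v₁ := by
  classical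
  have hsp : ⊤ ≤ Submodule.span ℝ (Set.range fun x : {a : Dual ℝ V // a ∈ C.Delta} => x.1) := by
    rw [Subtype.range_coe_subtype]
    rw [show {x : Dual ℝ V | x ∈ C.Delta} = (C.Delta : Set (Dual ℝ V)) from rfl, C.span_delta]
  let B : Basis {a : Dual ℝ V // a ∈ C.Delta} ℝ (Dual ℝ V) := Basis.mk C.delta_indep hsp
  let ξ : Dual ℝ (Dual ℝ V) := ∑ i : {a : Dual ℝ V // a ∈ C.Delta}, B.coord i
  refine ⟨(Module.evalEquiv ℝ V).symm ξ, fun α hα => ?_⟩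
  have hval : α ((Module.evalEquiv ℝ V).symm ξ) = ξ α :=
    Module.apply_evalEquiv_symm_apply ℝ V α ξ
  have hξδ : ∀ i : {a : Dual ℝ V // a ∈ C.Delta}, ξ i.1 = 1 := by
    intro i
    have hB : (B i : Dual ℝ V) = i.1 := Basis.mk_apply C.delta_indep hsp i
    have : ξ (B i) = 1 := by
      simp only [ξ, LinearMap.coe_sum, Finset.sum_apply, Basis.coord_apply, Basis.repr_self]
      simp [Finsupp.single_apply]
    rwa [hB] at this
  obtain ⟨c, hc⟩ := C.pos_of_delta α hα
  have hξα : ξ α = ∑ β ∈ C.Delta, (c β : ℝ) := by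
    rw [hc, map_sum]
    refine Finset.sum_congr rfl fun β hβ => ?_
    rw [map_smul, hξδ ⟨β, hβ⟩]
    simp
  rw [hval, hξα]
  have hne : ∃ β ∈ C.Delta, c β ≠ 0 := by
    by_contra h
    push_neg at h
    apply C.root_ne_zero α (C.pos_subset hα)
    rw [hc]
    exact Finset.sum_eq_zero fun β hβ => by rw [h β hβ]; simp
  obtain ⟨β, hβ, hcβ⟩ := hne
  refine Finset.sum_pos' (fun i _ => by positivity) ⟨β, hβ, ?_⟩
  exact_mod_cast Nat.pos_of_ne_zero hcβ

lemma exists_alcove_vec : ∃ v₀, v₀ ∈ C.alcove := by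
  obtain ⟨v₁, hv₁⟩ := C.exists_pos_vec
  set s : ℝ := ∑ α ∈ C.Pos, α v₁ with hs
  have hs0 : 0 ≤ s := Finset.sum_nonneg fun α hα => (hv₁ α hα).le
  have h1s : (0:ℝ) < 1 + s := by linarith
  refine ⟨(1 + s)⁻¹ • v₁, ?_⟩
  simp only [RootSystemCtx.alcove, Set.mem_setOf_eq]
  intro α hα
  have hαle : α v₁ ≤ s := Finset.single_le_sum (fun β hβ => (hv₁ β hβ).le) hα
  have hαpos := hv₁ α hα
  constructor
  · rw [map_smul, smul_eq_mul]
    positivity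
  · rw [map_smul, smul_eq_mul, inv_mul_eq_div, div_lt_one h1s]
    linarith

lemma alcove_mem {v : V} (hv : v ∈ C.alcove) {α : Dual ℝ V} (hα : α ∈ C.Pos) :
    0 < α v ∧ α v < 1 := hv α hα

lemma chamber_mem {v : V} (hv : v ∈ C.chamber) {α : Dual ℝ V} (hα : α ∈ C.Pos) :
    0 < α v := hv α hα

lemma comp_symm_comp (w : V ≃ₗ[ℝ] V) (γ : Dual ℝ V) :
    (γ.comp w.symm.toLinearMap).comp w.toLinearMap = γ := by
  ext v; simp

lemma comp_comp_symm (w : V ≃ₗ[ℝ] V) (γ : Dual ℝ V) :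
    (γ.comp w.toLinearMap).comp w.symm.toLinearMap = γ := by
  ext v; simp

lemma comp_mem_Phi {w : V ≃ₗ[ℝ] V} (hw : w ∈ C.W) :
    ∀ α ∈ C.Φ, α.comp w.toLinearMap ∈ C.Φ ∧ α.comp w.symm.toLinearMap ∈ C.Φ := by
  rw [C.W_gen] at hw
  induction hw using Subgroup.closure_induction with
  | mem g hg =>
    obtain ⟨γ, hγ, hgdef⟩ := hg
    have h2 : γ (C.coroot γ) = (2:ℝ) := C.coroot_self γ hγ
    have hcomp : ∀ α : Dual ℝ V, α.comp g.toLinearMap = α - α (C.coroot γ) • γ := by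
      intro α; ext v
      simp only [LinearMap.comp_apply, LinearEquiv.coe_coe, LinearMap.sub_apply,
        LinearMap.smul_apply, smul_eq_mul]
      rw [hgdef v]
      simp only [map_sub, map_smul, smul_eq_mul]
      ring
    have hgg : ∀ v, g (g v) = v := by
      intro v
      rw [hgdef (g v), hgdef v]
      simp only [map_sub, map_smul, h2, smul_eq_mul]
      rw [show γ v - γ v * 2 = -γ v by ring, neg_smul]
      abel
    have hsymm : g.symm.toLinearMap = g.toLinearMap := by
      ext v
      simp only [LinearEquiv.coe_coe]
      conv_lhs => rw [← hgg v]
      rw [LinearEquiv.symm_apply_apply]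
    intro α hα
    constructor
    · rw [hcomp]; exact C.root_reflect_mem γ hγ α hα
    · rw [hsymm, hcomp]; exact C.root_reflect_mem γ hγ α hα
  | one =>
    intro α hα
    constructor
    · simpa using hα
    · convert hα using 1
      ext v; rfl
  | mul x y hx hy ihx ihy =>
    intro α hα
    have hmul : α.comp (x * y).toLinearMap = (α.comp x.toLinearMap).comp y.toLinearMap := rfl
    have hsymmapp : ∀ v, (x * y).symm v = y.symm (x.symm v) := by
      intro v
      apply (x * y).injective
      rw [LinearEquiv.apply_symm_apply]
      show v = x (y (y.symm (x.symm v)))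
      rw [LinearEquiv.apply_symm_apply, LinearEquiv.apply_symm_apply]
    have hmuls : α.comp (x * y).symm.toLinearMap
        = (α.comp y.symm.toLinearMap).comp x.symm.toLinearMap := by
      ext v
      simp only [LinearMap.comp_apply, LinearEquiv.coe_coe]
      rw [hsymmapp v]
    constructor
    · rw [hmul]; exact (ihy _ (ihx α hα).1).1
    · rw [hmuls]; exact (ihx _ (ihy α hα).2).2
  | inv x hx ihx =>
    intro α hα
    have h1 : (x⁻¹ : V ≃ₗ[ℝ] V).toLinearMap = x.symm.toLinearMap := rfl
    have h2 : (x⁻¹ : V ≃ₗ[ℝ] V).symm.toLinearMap = x.toLinearMap := rfl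
    rw [h1, h2]
    exact ⟨(ihx α hα).2, (ihx α hα).1⟩

lemma mem_pos_iff_val {v₁ : V} (hv₁ : ∀ α ∈ C.Pos, 0 < α v₁) {β : Dual ℝ V} (hβ : β ∈ C.Φ) :
    β ∈ C.Pos ↔ 0 < β v₁ := by
  constructor
  · exact fun h => hv₁ β h
  · intro h
    rcases C.pos_or_neg hβ with h' | h'
    · exact h'
    · have := hv₁ _ h'
      simp only [LinearMap.neg_apply] at this
      linarith

lemma mem_invSet {w : V ≃ₗ[ℝ] V} {γ : Dual ℝ V} :
    γ ∈ C.invSet w ↔ γ ∈ C.Pos ∧ -(γ.comp w.symm.toLinearMap) ∈ C.Pos := by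
  classical
  unfold RootSystemCtx.invSet dAct
  rw [Finset.mem_filter]


lemma neg_mem_pos_of_val {v₁ : V} (hv₁ : ∀ α ∈ C.Pos, 0 < α v₁) {φ : Dual ℝ V} (hφ : φ ∈ C.Φ)
    (h : φ v₁ < 0) : -φ ∈ C.Pos := by
  rcases C.pos_or_neg hφ with h' | h'
  · linarith [hv₁ φ h']
  · exact h'

/-- The reflection attached to a root, as a linear automorphism of `V`. -/
noncomputable def reflE (γ : Dual ℝ V) (h2 : γ (C.coroot γ) = 2) : V ≃ₗ[ℝ] V :=
  LinearEquiv.ofInvolutive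
    { toFun := fun v => v - γ v • C.coroot γ
      map_add' := fun a b => by
        simp only [map_add, add_smul]
        abel
      map_smul' := fun c a => by
        simp only [map_smul, smul_eq_mul, RingHom.id_apply, smul_sub, smul_smul] }
    (fun v => by
      show (v - γ v • C.coroot γ) - γ (v - γ v • C.coroot γ) • C.coroot γ = v
      have hc : γ (v - γ v • C.coroot γ) = -γ v := by
        simp only [map_sub, map_smul, smul_eq_mul, h2]
        ring
      rw [hc, neg_smul]
      abel)

lemma reflE_apply (γ : Dual ℝ V) (h2 : γ (C.coroot γ) = 2) (v : V) :
    C.reflE γ h2 v = v - γ v • C.coroot γ := rfl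

lemma reflE_invol (γ : Dual ℝ V) (h2 : γ (C.coroot γ) = 2) (v : V) :
    C.reflE γ h2 (C.reflE γ h2 v) = v := by
  have hc : γ (C.reflE γ h2 v) = -γ v := by
    rw [C.reflE_apply]
    simp only [map_sub, map_smul, smul_eq_mul, h2]
    ring
  rw [C.reflE_apply γ h2 (C.reflE γ h2 v), hc, C.reflE_apply, neg_smul]
  abel

lemma reflE_symm (γ : Dual ℝ V) (h2 : γ (C.coroot γ) = 2) :
    (C.reflE γ h2).symm.toLinearMap = (C.reflE γ h2).toLinearMap := by
  ext v
  simp only [LinearEquiv.coe_coe]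
  conv_lhs => rw [← C.reflE_invol γ h2 v]
  rw [LinearEquiv.symm_apply_apply]

lemma reflE_mem_W (γ : Dual ℝ V) (hγ : γ ∈ C.Φ) :
    C.reflE γ (C.coroot_self γ hγ) ∈ C.W := by
  rw [C.W_gen]
  exact Subgroup.subset_closure ⟨γ, hγ, fun v => rfl⟩

lemma comp_reflE (γ : Dual ℝ V) (h2 : γ (C.coroot γ) = 2) (β : Dual ℝ V) :
    β.comp (C.reflE γ h2).toLinearMap = β - β (C.coroot γ) • γ := by
  ext v
  simp only [LinearMap.comp_apply, LinearEquiv.coe_coe, C.reflE_apply, map_sub, map_smul,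
    LinearMap.sub_apply, LinearMap.smul_apply, smul_eq_mul]
  ring

lemma len_mul_reflE_lt {w : V ≃ₗ[ℝ] V} (hw : w ∈ C.W) {γ : Dual ℝ V} (hγ : γ ∈ C.Φ)
    (hγinv : γ ∈ C.invSet w) :
    C.len (w * C.reflE γ (C.coroot_self γ hγ)) < C.len w := by
  classical
  obtain ⟨v₁, hv₁⟩ := C.exists_pos_vec
  obtain ⟨hγP, hγN⟩ := C.mem_invSet.mp hγinv
  set h2 := C.coroot_self γ hγ with hh2
  set t := C.reflE γ h2 with ht
  set τ : Dual ℝ V → Dual ℝ V := fun β => β (C.coroot γ) • γ - β with hτdef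
  have hτval : ∀ (β : Dual ℝ V) (v : V), τ β v = β (C.coroot γ) * γ v - β v := by
    intro β v
    simp [hτdef]
  have hτinv : ∀ β, τ (τ β) = β := by
    intro β; ext v
    simp only [hτval, h2]
    ring
  have hτinj : Function.Injective τ := fun a b hab => by
    rw [← hτinv a, hab, hτinv]
  have hτneg : ∀ β : Dual ℝ V, τ (-β) = -(τ β) := by
    intro β; ext v
    simp only [hτval, LinearMap.neg_apply]
    ring
  have hτγ : τ γ = γ := by
    ext v; simp only [hτval, h2]; ring
  have hσrole : ∀ β : Dual ℝ V, β.comp t.toLinearMap = -(τ β) := by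
    intro β; ext v
    simp only [ht, C.comp_reflE, LinearMap.sub_apply, LinearMap.smul_apply, smul_eq_mul,
      LinearMap.neg_apply, hτval]
    ring
  have hσΦ : ∀ β ∈ C.Φ, -(τ β) ∈ C.Φ := by
    intro β hβ
    rw [← hσrole, ht, C.comp_reflE]
    exact C.root_reflect_mem γ hγ β hβ
  have hP2mem : ∀ β, β ∈ C.invSet t ↔ β ∈ C.Pos ∧ τ β ∈ C.Pos := by
    intro β
    rw [C.mem_invSet]
    have hc : β.comp t.symm.toLinearMap = -(τ β) := by
      rw [ht, C.reflE_symm, ← ht]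
      exact hσrole β
    rw [hc, neg_neg]
  have hτP2 : ∀ β, β ∈ C.invSet t → τ β ∈ C.invSet t := by
    intro β hβ
    obtain ⟨h1, h2'⟩ := (hP2mem β).mp hβ
    exact (hP2mem (τ β)).mpr ⟨h2', by rw [hτinv]; exact h1⟩
  have hγP2 : γ ∈ C.invSet t := (hP2mem γ).mpr ⟨hγP, by rw [hτγ]; exact hγP⟩
  have hcpos : ∀ β ∈ C.invSet t, 0 < β (C.coroot γ) := by
    intro β hβ
    obtain ⟨h1, h2'⟩ := (hP2mem β).mp hβ
    have e1 := hv₁ β h1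
    have e2 := hv₁ _ h2'
    rw [hτval] at e2
    have e3 := hv₁ γ hγP
    nlinarith
  have hwγneg : (γ.comp w.symm.toLinearMap) v₁ < 0 := by
    have := hv₁ _ hγN
    simp only [LinearMap.neg_apply] at this
    linarith
  set NT := C.invSet (w * t) with hNT
  set N := C.invSet w with hN
  set P2 := C.invSet t with hP2
  set S := P2 ∩ N with hSdef
  have claim1 : ∀ β ∈ P2, β ∈ S ∨ τ β ∈ S := by
    intro β hβ
    obtain ⟨hβPos, hτβPos⟩ := (hP2mem β).mp hβ
    have hsum : (β.comp w.symm.toLinearMap) v₁ + ((τ β).comp w.symm.toLinearMap) v₁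
        = β (C.coroot γ) * (γ.comp w.symm.toLinearMap) v₁ := by
      simp only [LinearMap.comp_apply, LinearEquiv.coe_coe, hτval]
      ring
    have hneg : (β.comp w.symm.toLinearMap) v₁ < 0 ∨ ((τ β).comp w.symm.toLinearMap) v₁ < 0 := by
      by_contra hcon
      push_neg at hcon
      have hc := hcpos β hβ
      nlinarith [hcon.1, hcon.2]
    rcases hneg with h | h
    · left
      refine Finset.mem_inter.mpr ⟨hβ, C.mem_invSet.mpr ⟨hβPos, ?_⟩⟩
      exact C.neg_mem_pos_of_val hv₁ ((C.comp_mem_Phi hw β (C.pos_subset hβPos)).2) h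
    · right
      refine Finset.mem_inter.mpr ⟨hτP2 β hβ, C.mem_invSet.mpr ⟨hτβPos, ?_⟩⟩
      exact C.neg_mem_pos_of_val hv₁ ((C.comp_mem_Phi hw (τ β) (C.pos_subset hτβPos)).2) h
  have hγS : γ ∈ S := Finset.mem_inter.mpr ⟨hγP2, hγinv⟩
  have hcard1 : P2.card + 1 ≤ 2 * S.card := by
    have himg : P2 ⊆ S ∪ S.image τ := by
      intro β hβ
      rcases claim1 β hβ with h | h
      · exact Finset.mem_union_left _ h
      · exact Finset.mem_union_right _ (Finset.mem_image.mpr ⟨τ β, h, hτinv β⟩)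
    have hγboth : γ ∈ S ∩ S.image τ :=
      Finset.mem_inter.mpr ⟨hγS, Finset.mem_image.mpr ⟨γ, hγS, hτγ⟩⟩
    have h1 := Finset.card_union_add_card_inter S (S.image τ)
    have h2' : (S.image τ).card = S.card := Finset.card_image_of_injective _ hτinj
    have h3 := Finset.card_le_card himg
    have h4 : 1 ≤ (S ∩ S.image τ).card := Finset.card_pos.mpr ⟨γ, hγboth⟩
    omega
  have hwtsymm : ∀ β : Dual ℝ V, β.comp (w * t).symm.toLinearMap
      = -((τ β).comp w.symm.toLinearMap) := by
    intro β
    have hsymmapp : ∀ v, (w * t).symm v = t.symm (w.symm v) := by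
      intro v
      apply (w * t).injective
      rw [LinearEquiv.apply_symm_apply]
      show v = w (t (t.symm (w.symm v)))
      rw [LinearEquiv.apply_symm_apply, LinearEquiv.apply_symm_apply]
    ext v
    simp only [LinearMap.comp_apply, LinearEquiv.coe_coe, LinearMap.neg_apply]
    rw [hsymmapp v]
    have h1 : t.symm (w.symm v) = t (w.symm v) := by
      have := LinearMap.congr_fun (C.reflE_symm γ h2) (w.symm v)
      simpa [← ht] using this
    rw [h1]
    have h2'' := LinearMap.congr_fun (hσrole β) (w.symm v)
    simp only [LinearMap.comp_apply, LinearEquiv.coe_coe, LinearMap.neg_apply] at h2''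
    exact h2''
  have hNTmem : ∀ β, β ∈ NT ↔ β ∈ C.Pos ∧ (τ β).comp w.symm.toLinearMap ∈ C.Pos := by
    intro β
    rw [hNT, C.mem_invSet, hwtsymm β, neg_neg]
  have hbij1 : (NT \ P2).card = (N \ P2).card := by
    refine Finset.card_nbij' (fun β => -(τ β)) (fun β => -(τ β)) ?_ ?_ ?_ ?_
    · intro β hβ
      simp only [Finset.mem_coe, Finset.mem_sdiff] at hβ ⊢
      obtain ⟨hβNT, hβnP2⟩ := hβ
      obtain ⟨hβPos, hX⟩ := (hNTmem β).mp hβNT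
      have hτβnPos : τ β ∉ C.Pos := fun hc => hβnP2 ((hP2mem β).mpr ⟨hβPos, hc⟩)
      have hηΦ : -(τ β) ∈ C.Φ := hσΦ β (C.pos_subset hβPos)
      have hηPos : -(τ β) ∈ C.Pos := by
        rcases C.pos_or_neg hηΦ with h' | h'
        · exact h'
        · rw [neg_neg] at h'; exact absurd h' hτβnPos
      constructor
      · rw [hN, C.mem_invSet]
        refine ⟨hηPos, ?_⟩
        rw [LinearMap.neg_comp, neg_neg]
        exact hX
      · intro hc
        obtain ⟨_, hτη⟩ := (hP2mem _).mp hc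
        rw [hτneg, hτinv] at hτη
        exact (C.not_both_pos (C.pos_subset hβPos)) ⟨hβPos, hτη⟩
    · intro η hη
      simp only [Finset.mem_coe, Finset.mem_sdiff] at hη ⊢
      obtain ⟨hηN, hηnP2⟩ := hη
      obtain ⟨hηPos, hX⟩ := C.mem_invSet.mp hηN
      have hτηnPos : τ η ∉ C.Pos := fun hc => hηnP2 ((hP2mem η).mpr ⟨hηPos, hc⟩)
      have hβΦ : -(τ η) ∈ C.Φ := hσΦ η (C.pos_subset hηPos)
      have hβPos : -(τ η) ∈ C.Pos := by
        rcases C.pos_or_neg hβΦ with h' | h'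
        · exact h'
        · rw [neg_neg] at h'; exact absurd h' hτηnPos
      constructor
      · rw [hNT] at *
        refine (hNTmem _).mpr ⟨hβPos, ?_⟩
        rw [hτneg, hτinv, LinearMap.neg_comp]
        exact hX
      · intro hc
        obtain ⟨_, hτη⟩ := (hP2mem _).mp hc
        rw [hτneg, hτinv] at hτη
        exact (C.not_both_pos (C.pos_subset hηPos)) ⟨hηPos, hτη⟩
    · intro β _
      show -τ (-τ β) = β
      rw [hτneg, hτinv, neg_neg]
    · intro η _
      show -τ (-τ η) = η
      rw [hτneg, hτinv, neg_neg]
  have hbij2 : (NT ∩ P2).card = (P2 \ N).card := by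
    refine Finset.card_nbij' τ τ ?_ ?_ ?_ ?_
    · intro β hβ
      simp only [Finset.mem_coe, Finset.mem_inter] at hβ
      obtain ⟨hβNT, hβP2⟩ := hβ
      obtain ⟨hβPos, hX⟩ := (hNTmem β).mp hβNT
      obtain ⟨_, hτβPos⟩ := (hP2mem β).mp hβP2
      rw [Finset.mem_coe, Finset.mem_sdiff]
      refine ⟨hτP2 β hβP2, ?_⟩
      intro hc
      obtain ⟨_, hneg⟩ := C.mem_invSet.mp hc
      have hΦ : (τ β).comp w.symm.toLinearMap ∈ C.Φ :=
        (C.comp_mem_Phi hw (τ β) (C.pos_subset hτβPos)).2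
      exact (C.not_both_pos hΦ) ⟨hX, hneg⟩
    · intro η hη
      rw [Finset.mem_coe, Finset.mem_sdiff] at hη
      obtain ⟨hηP2, hηnN⟩ := hη
      obtain ⟨hηPos, hτηPos⟩ := (hP2mem η).mp hηP2
      have hΦ : η.comp w.symm.toLinearMap ∈ C.Φ :=
        (C.comp_mem_Phi hw η (C.pos_subset hηPos)).2
      have hXpos : η.comp w.symm.toLinearMap ∈ C.Pos := by
        rcases C.pos_or_neg hΦ with h' | h'
        · exact h'
        · exact absurd (C.mem_invSet.mpr ⟨hηPos, h'⟩) hηnN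
      rw [Finset.mem_coe, Finset.mem_inter]
      refine ⟨(hNTmem (τ η)).mpr ⟨hτηPos, ?_⟩, hτP2 η hηP2⟩
      rw [hτinv]
      exact hXpos
    · intro β _; exact hτinv β
    · intro η _; exact hτinv η
  have f1 := Finset.card_inter_add_card_sdiff NT P2
  have f2 := Finset.card_inter_add_card_sdiff N P2
  have f6 := Finset.card_inter_add_card_sdiff P2 N
  have f3 : N ∩ P2 = S := by rw [hSdef, Finset.inter_comm]
  rw [f3] at f2
  have f7 : S.card = (P2 ∩ N).card := by rw [hSdef]
  show NT.card < N.card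
  omega

lemma minrep_inv_ne_zero {w : V ≃ₗ[ℝ] V} {lam : V} (hw : C.IsMinRep w lam)
    {γ : Dual ℝ V} (hγinv : γ ∈ C.invSet w) : γ lam ≠ 0 := by
  intro h0
  have hγP := (C.mem_invSet.mp hγinv).1
  have hγΦ := C.pos_subset hγP
  have hfix : C.reflE γ (C.coroot_self γ hγΦ) lam = lam := by
    rw [C.reflE_apply, h0]
    simp
  have hle := hw.2 _ (C.reflE_mem_W γ hγΦ) hfix
  have hlt := C.len_mul_reflE_lt hw.1 hγΦ hγinv
  omega


open Classical in
/-- Positive roots sent to positive roots by precomposition with `w`. -/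
noncomputable def Pp (w : V ≃ₗ[ℝ] V) : Finset (Dual ℝ V) :=
  C.Pos.filter fun α => α.comp w.toLinearMap ∈ C.Pos

open Classical in
/-- Positive roots sent to negative roots by precomposition with `w`. -/
noncomputable def Pm (w : V ≃ₗ[ℝ] V) : Finset (Dual ℝ V) :=
  C.Pos.filter fun α => α.comp w.toLinearMap ∉ C.Pos

lemma mem_Pp {w : V ≃ₗ[ℝ] V} {α : Dual ℝ V} :
    α ∈ C.Pp w ↔ α ∈ C.Pos ∧ α.comp w.toLinearMap ∈ C.Pos := by
  classical
  unfold RootSystemCtx.Pp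
  rw [Finset.mem_filter]

lemma mem_Pm {w : V ≃ₗ[ℝ] V} {α : Dual ℝ V} :
    α ∈ C.Pm w ↔ α ∈ C.Pos ∧ α.comp w.toLinearMap ∉ C.Pos := by
  classical
  unfold RootSystemCtx.Pm
  rw [Finset.mem_filter]

lemma sum_split (w : V ≃ₗ[ℝ] V) (f : Dual ℝ V → ℝ) :
    ∑ α ∈ C.Pos, f α = ∑ α ∈ C.Pp w, f α + ∑ α ∈ C.Pm w, f α := by
  classical
  unfold RootSystemCtx.Pp RootSystemCtx.Pm
  rw [Finset.sum_filter_add_sum_filter_not]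

lemma sum_pos_comp {w : V ≃ₗ[ℝ] V} (hw : w ∈ C.W) (v : V) :
    ∑ γ ∈ C.Pos, γ v
      = ∑ α ∈ C.Pp w, (α.comp w.toLinearMap) v - ∑ α ∈ C.Pm w, (α.comp w.toLinearMap) v := by
  classical
  have key : ∑ γ ∈ C.Pos, γ v = ∑ α ∈ C.Pos,
      (if α.comp w.toLinearMap ∈ C.Pos then (α.comp w.toLinearMap) v
       else -((α.comp w.toLinearMap) v)) := by
    refine Finset.sum_nbij'
      (fun γ => if γ.comp w.symm.toLinearMap ∈ C.Pos then γ.comp w.symm.toLinearMap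
        else -(γ.comp w.symm.toLinearMap))
      (fun α => if α.comp w.toLinearMap ∈ C.Pos then α.comp w.toLinearMap
        else -(α.comp w.toLinearMap)) ?_ ?_ ?_ ?_ ?_
    · intro γ hγ
      by_cases hc : γ.comp w.symm.toLinearMap ∈ C.Pos
      · simpa [hc] using hc
      · simp only [hc, if_false]
        rcases C.pos_or_neg ((C.comp_mem_Phi hw γ (C.pos_subset hγ)).2) with h' | h'
        · exact absurd h' hc
        · exact h'
    · intro α hα
      by_cases hc : α.comp w.toLinearMap ∈ C.Pos
      · simpa [hc] using hc
      · simp only [hc, if_false]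
        rcases C.pos_or_neg ((C.comp_mem_Phi hw α (C.pos_subset hα)).1) with h' | h'
        · exact absurd h' hc
        · exact h'
    · intro γ hγ
      have hng : -γ ∉ C.Pos := fun h => (C.not_both_pos (C.pos_subset hγ)) ⟨hγ, h⟩
      by_cases hc : γ.comp w.symm.toLinearMap ∈ C.Pos
      · simp [hc, comp_symm_comp, hγ]
      · simp [hc, LinearMap.neg_comp, comp_symm_comp, hng]
    · intro α hα
      have hng : -α ∉ C.Pos := fun h => (C.not_both_pos (C.pos_subset hα)) ⟨hα, h⟩
      by_cases hc : α.comp w.toLinearMap ∈ C.Pos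
      · simp [hc, comp_comp_symm, hα]
      · simp [hc, LinearMap.neg_comp, comp_comp_symm, hng]
    · intro γ hγ
      have hng : -γ ∉ C.Pos := fun h => (C.not_both_pos (C.pos_subset hγ)) ⟨hγ, h⟩
      by_cases hc : γ.comp w.symm.toLinearMap ∈ C.Pos
      · simp [hc, comp_symm_comp, hγ]
      · simp [hc, LinearMap.neg_comp, comp_symm_comp, hng]
  rw [key, C.sum_split w (fun α => if α.comp w.toLinearMap ∈ C.Pos then (α.comp w.toLinearMap) v
       else -((α.comp w.toLinearMap) v))]
  have e1 : ∑ α ∈ C.Pp w, (if α.comp w.toLinearMap ∈ C.Pos then (α.comp w.toLinearMap) v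
      else -((α.comp w.toLinearMap) v)) = ∑ α ∈ C.Pp w, (α.comp w.toLinearMap) v :=
    Finset.sum_congr rfl fun α hα => if_pos (C.mem_Pp.mp hα).2
  have e2 : ∑ α ∈ C.Pm w, (if α.comp w.toLinearMap ∈ C.Pos then (α.comp w.toLinearMap) v
      else -((α.comp w.toLinearMap) v)) = ∑ α ∈ C.Pm w, -((α.comp w.toLinearMap) v) :=
    Finset.sum_congr rfl fun α hα => if_neg (C.mem_Pm.mp hα).2
  rw [e1, e2, Finset.sum_neg_distrib]
  ring

lemma sum_invSet_eq {w : V ≃ₗ[ℝ] V} (hw : w ∈ C.W) (v : V) :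
    ∑ γ ∈ C.invSet w, γ v = -∑ α ∈ C.Pm w, (α.comp w.toLinearMap) v := by
  rw [← Finset.sum_neg_distrib]
  refine Finset.sum_nbij' (fun γ => -(γ.comp w.symm.toLinearMap))
    (fun α => -(α.comp w.toLinearMap)) ?_ ?_ ?_ ?_ ?_
  · intro γ hγ
    obtain ⟨h1, h2⟩ := C.mem_invSet.mp hγ
    refine C.mem_Pm.mpr ⟨h2, ?_⟩
    rw [LinearMap.neg_comp, comp_symm_comp]
    exact fun h => (C.not_both_pos (C.pos_subset h1)) ⟨h1, h⟩
  · intro α hα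
    obtain ⟨h1, h2⟩ := C.mem_Pm.mp hα
    have hΦ : α.comp w.toLinearMap ∈ C.Φ := (C.comp_mem_Phi hw α (C.pos_subset h1)).1
    have hpos : -(α.comp w.toLinearMap) ∈ C.Pos := by
      rcases C.pos_or_neg hΦ with h' | h'
      · exact absurd h' h2
      · exact h'
    refine C.mem_invSet.mpr ⟨hpos, ?_⟩
    rw [LinearMap.neg_comp, comp_comp_symm, neg_neg]
    exact h1
  · intro γ _
    show -((-(γ.comp w.symm.toLinearMap)).comp w.toLinearMap) = γ
    rw [LinearMap.neg_comp, comp_symm_comp, neg_neg]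
  · intro α _
    show -((-(α.comp w.toLinearMap)).comp w.symm.toLinearMap) = α
    rw [LinearMap.neg_comp, comp_comp_symm, neg_neg]
  · intro γ _
    show γ v = -((-(γ.comp w.symm.toLinearMap)).comp w.toLinearMap) v
    rw [LinearMap.neg_comp, comp_symm_comp]
    simp

lemma card_invSet_eq_Pm {w : V ≃ₗ[ℝ] V} (hw : w ∈ C.W) :
    (C.invSet w).card = (C.Pm w).card := by
  refine Finset.card_nbij' (fun γ => -(γ.comp w.symm.toLinearMap))
    (fun α => -(α.comp w.toLinearMap)) ?_ ?_ ?_ ?_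
  · intro γ hγ
    obtain ⟨h1, h2⟩ := C.mem_invSet.mp hγ
    refine C.mem_Pm.mpr ⟨h2, ?_⟩
    rw [LinearMap.neg_comp, comp_symm_comp]
    exact fun h => (C.not_both_pos (C.pos_subset h1)) ⟨h1, h⟩
  · intro α hα
    obtain ⟨h1, h2⟩ := C.mem_Pm.mp hα
    have hΦ : α.comp w.toLinearMap ∈ C.Φ := (C.comp_mem_Phi hw α (C.pos_subset h1)).1
    have hpos : -(α.comp w.toLinearMap) ∈ C.Pos := by
      rcases C.pos_or_neg hΦ with h' | h'
      · exact absurd h' h2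
      · exact h'
    refine C.mem_invSet.mpr ⟨hpos, ?_⟩
    rw [LinearMap.neg_comp, comp_comp_symm, neg_neg]
    exact h1
  · intro γ _
    show -((-(γ.comp w.symm.toLinearMap)).comp w.toLinearMap) = γ
    rw [LinearMap.neg_comp, comp_symm_comp, neg_neg]
  · intro α _
    show -((-(α.comp w.toLinearMap)).comp w.symm.toLinearMap) = α
    rw [LinearMap.neg_comp, comp_comp_symm, neg_neg]

lemma rho_apply (x : V) : C.rho x = 2⁻¹ * ∑ α ∈ C.Pos, α x := by
  rw [RootSystemCtx.rho]
  simp [LinearMap.smul_apply, smul_eq_mul, LinearMap.coe_sum, Finset.sum_apply]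

lemma sepCount_eq_sum (S T : Set V) (I : Dual ℝ V → Finset ℤ)
    (h : ∀ α ∈ C.Pos, ∀ n : ℤ, SepBy α n S T ↔ n ∈ I α) :
    C.sepCount S T = ∑ α ∈ C.Pos, (I α).card := by
  classical
  have hset : {p : Dual ℝ V × ℤ | p.1 ∈ C.Pos ∧ SepBy p.1 p.2 S T}
      = ((C.Pos.biUnion fun α => (I α).image fun n => (α, n)) : Finset (Dual ℝ V × ℤ)) := by
    ext ⟨α, n⟩
    simp only [Set.mem_setOf_eq, Finset.mem_coe, Finset.mem_biUnion, Finset.mem_image,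
      Prod.mk.injEq]
    constructor
    · rintro ⟨hα, hsep⟩
      exact ⟨α, hα, n, (h α hα n).mp hsep, rfl, rfl⟩
    · rintro ⟨β, hβ, m, hm, rfl, rfl⟩
      exact ⟨hβ, (h β hβ m).mpr hm⟩
  rw [RootSystemCtx.sepCount, hset, Set.ncard_coe_finset, Finset.card_biUnion]
  · refine Finset.sum_congr rfl fun α _ => Finset.card_image_of_injective _ ?_
    intro a b hab
    simpa using congrArg Prod.snd hab
  · intro x hx y hy hxy
    rw [Function.onFun, Finset.disjoint_left]
    rintro ⟨a, b⟩ h1 h2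
    simp only [Finset.mem_image, Prod.mk.injEq] at h1 h2
    obtain ⟨m, _, hm1, _⟩ := h1
    obtain ⟨m', _, hm2, _⟩ := h2
    exact hxy (hm1.trans hm2.symm)

end RootSystemCtx

lemma round_cast_eq {x : ℝ} (h : ∃ n : ℤ, x = (n:ℝ)) : ((round x : ℤ) : ℝ) = x := by
  obtain ⟨n, rfl⟩ := h
  rw [round_intCast]

namespace RootSystemCtx
variable (C : RootSystemCtx V)

lemma affLen_transl {μ : V} (hint : C.IsIntegral μ) (hdom : C.IsDominant μ) :
    ((C.affLen (affT μ 1) : ℕ) : ℝ) = ∑ α ∈ C.Pos, α μ := by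
  classical
  obtain ⟨v₀, hv₀⟩ := C.exists_alcove_vec
  have hval : ∀ (α : Dual ℝ V) (a : V), α (affT μ 1 a) = α a + α μ := by
    intro α a
    simp [affT, LinearEquiv.coe_one, map_add]
  have key : ∀ α ∈ C.Pos, ∀ n : ℤ, SepBy α n C.alcove (affT μ 1 '' C.alcove)
      ↔ n ∈ Finset.Icc 1 (round (α μ)) := by
    intro α hα n
    have hkα : ((round (α μ) : ℤ) : ℝ) = α μ := round_cast_eq (hint α (C.pos_subset hα))
    have hk0 : 0 ≤ round (α μ) := by
      have h := hdom α hα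
      rw [← hkα] at h
      exact_mod_cast h
    have hmem := C.alcove_mem hv₀ hα
    rw [Finset.mem_Icc]
    constructor
    · rintro (⟨h1, h2⟩ | ⟨h1, h2⟩)
      · have e1 := h1 v₀ hv₀
        have e2 := h2 (affT μ 1 v₀) ⟨v₀, hv₀, rfl⟩
        rw [hval] at e2
        constructor
        · have h3 : (0:ℝ) < (n:ℝ) := lt_trans hmem.1 e1
          exact_mod_cast h3
        · have h3 : (n:ℝ) < ((round (α μ) : ℤ) : ℝ) + 1 := by
            rw [hkα]
            linarith [hmem.2]
          have h4 : n < round (α μ) + 1 := by exact_mod_cast h3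
          omega
      · exfalso
        have e1 := h1 v₀ hv₀
        have e2 := h2 (affT μ 1 v₀) ⟨v₀, hv₀, rfl⟩
        rw [hval] at e2
        have h3 : (n:ℝ) < 1 := lt_trans e1 hmem.2
        have h4 : (0:ℝ) < (n:ℝ) := by
          have h5 : (0:ℝ) ≤ α μ := hdom α hα
          linarith [hmem.1]
        have h5 : 0 < n := by exact_mod_cast h4
        have h6 : n < 1 := by exact_mod_cast h3
        omega
    · rintro ⟨hn1, hn2⟩
      left
      constructor
      · intro v hv
        have h3 := (C.alcove_mem hv hα).2
        have h1n : (1:ℝ) ≤ (n:ℝ) := by exact_mod_cast hn1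
        linarith
      · rintro v ⟨a, ha, rfl⟩
        rw [hval]
        have h3 := (C.alcove_mem ha hα).1
        have hnk : (n:ℝ) ≤ ((round (α μ) : ℤ) : ℝ) := by exact_mod_cast hn2
        rw [hkα] at hnk
        linarith
  rw [RootSystemCtx.affLen, C.sepCount_eq_sum _ _ _ key]
  push_cast
  refine Finset.sum_congr rfl fun α hα => ?_
  have hkα : ((round (α μ) : ℤ) : ℝ) = α μ := round_cast_eq (hint α (C.pos_subset hα))
  have hk0 : 0 ≤ round (α μ) := by
    have h := hdom α hα
    rw [← hkα] at h
    exact_mod_cast h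
  have h7 : (Finset.Icc 1 (round (α μ))).card = (round (α μ)).toNat := by
    rw [Int.card_Icc]
    congr 1
    ring
  rw [h7]
  have hfin : (((round (α μ)).toNat : ℕ) : ℝ) = ((round (α μ) : ℤ) : ℝ) := by
    exact_mod_cast congrArg (Int.cast : ℤ → ℝ) (Int.toNat_of_nonneg hk0)
  rw [hfin, hkα]

lemma sepCount_chamber_eq {w : V ≃ₗ[ℝ] V} (hwW : w ∈ C.W) {lam : V}
    (hint : C.IsIntegral lam) (hdom : C.IsDominant lam)
    (hmin : ∀ γ ∈ C.invSet w, γ lam ≠ 0) :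
    ((C.sepCount C.chamber (affT (-(w lam)) w '' C.alcove) : ℕ) : ℝ)
      = ∑ α ∈ C.Pp w, (α.comp w.toLinearMap) lam := by
  classical
  obtain ⟨v₀, hv₀⟩ := C.exists_alcove_vec
  obtain ⟨v₁, hv₁⟩ := C.exists_pos_vec
  have hch : ∀ t : ℝ, 0 < t → t • v₁ ∈ C.chamber := by
    intro t ht
    show ∀ α ∈ C.Pos, 0 < α (t • v₁)
    intro α hα
    rw [map_smul, smul_eq_mul]
    exact mul_pos ht (hv₁ α hα)
  have hunb : ∀ α ∈ C.Pos, ∀ n : ℤ, ¬(∀ v ∈ C.chamber, α v < (n:ℝ)) := by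
    intro α hα n hcon
    have hpos := hv₁ α hα
    have ht : (0:ℝ) < (|(n:ℝ)| + 1) / α v₁ := by positivity
    have h1 := hcon _ (hch _ ht)
    rw [map_smul, smul_eq_mul, div_mul_cancel₀ _ (ne_of_gt hpos)] at h1
    have h2 : (n:ℝ) ≤ |(n:ℝ)| := le_abs_self _
    linarith
  have hsmall : ∀ α ∈ C.Pos, ∀ n : ℤ, (∀ v ∈ C.chamber, (n:ℝ) < α v) → n ≤ 0 := by
    intro α hα n hcon
    have hpos := hv₁ α hα
    have h1 := hcon _ (hch (1 / (2 * α v₁)) (by positivity))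
    rw [map_smul, smul_eq_mul] at h1
    have heq : 1 / (2 * α v₁) * α v₁ = 1/2 := by
      field_simp
    rw [heq] at h1
    have h2 : (n:ℝ) < 1 := by linarith
    have h3 : n < 1 := by exact_mod_cast h2
    omega
  have hvalT : ∀ (α : Dual ℝ V) (a : V),
      α (affT (-(w lam)) w a) = (α.comp w.toLinearMap) a - (α.comp w.toLinearMap) lam := by
    intro α a
    simp [affT, LinearMap.comp_apply, sub_eq_add_neg]
  set I : Dual ℝ V → Finset ℤ := fun α =>
    if α.comp w.toLinearMap ∈ C.Pos
    then Finset.Icc (1 - round ((α.comp w.toLinearMap) lam)) 0 else ∅ with hIdef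
  have key : ∀ α ∈ C.Pos, ∀ n : ℤ,
      SepBy α n C.chamber (affT (-(w lam)) w '' C.alcove) ↔ n ∈ I α := by
    intro α hα n
    have hβΦ : α.comp w.toLinearMap ∈ C.Φ := (C.comp_mem_Phi hwW α (C.pos_subset hα)).1
    have hkα : ((round ((α.comp w.toLinearMap) lam) : ℤ) : ℝ) = (α.comp w.toLinearMap) lam :=
      round_cast_eq (hint _ hβΦ)
    by_cases hβ : α.comp w.toLinearMap ∈ C.Pos
    · have hk0 : 0 ≤ round ((α.comp w.toLinearMap) lam) := by
        have h := hdom _ hβ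
        rw [← hkα] at h
        exact_mod_cast h
      rw [hIdef]
      simp only [hβ, if_true, Finset.mem_Icc]
      constructor
      · rintro (⟨h1, h2⟩ | ⟨h1, h2⟩)
        · exact absurd h1 (hunb α hα n)
        · have hn0 := hsmall α hα n h1
          have e2 := h2 (affT (-(w lam)) w v₀) ⟨v₀, hv₀, rfl⟩
          rw [hvalT] at e2
          have h3 := (C.alcove_mem hv₀ hβ).1
          have h4 : ((-round ((α.comp w.toLinearMap) lam) : ℤ) : ℝ) < (n:ℝ) := by
            rw [Int.cast_neg, hkα]
            linarith
          have h5 : -round ((α.comp w.toLinearMap) lam) < n := by exact_mod_cast h4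
          omega
      · rintro ⟨hn1, hn2⟩
        right
        constructor
        · intro v hv
          have h3 := C.chamber_mem hv hα
          have h4 : (n:ℝ) ≤ 0 := by exact_mod_cast hn2
          linarith
        · rintro v ⟨a, ha, rfl⟩
          rw [hvalT]
          have h3 := (C.alcove_mem ha hβ).2
          have h4 : (1:ℝ) - ((round ((α.comp w.toLinearMap) lam) : ℤ) : ℝ) ≤ (n:ℝ) := by
            exact_mod_cast hn1
          rw [hkα] at h4
          linarith
    · have hβneg : -(α.comp w.toLinearMap) ∈ C.Pos := by
        rcases C.pos_or_neg hβΦ with h' | h'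
        · exact absurd h' hβ
        · exact h'
      have hγinv : -(α.comp w.toLinearMap) ∈ C.invSet w := by
        refine C.mem_invSet.mpr ⟨hβneg, ?_⟩
        rw [LinearMap.neg_comp, comp_comp_symm, neg_neg]
        exact hα
      have hne := hmin _ hγinv
      have hle : (α.comp w.toLinearMap) lam ≤ 0 := by
        have h := hdom _ hβneg
        simp only [LinearMap.neg_apply] at h
        linarith
      have hlt : (α.comp w.toLinearMap) lam < 0 := by
        rcases lt_or_eq_of_le hle with h | h
        · exact h
        · exfalso
          apply hne
          simp only [LinearMap.neg_apply, h]
          ring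
      have hkneg : round ((α.comp w.toLinearMap) lam) ≤ -1 := by
        have h : ((round ((α.comp w.toLinearMap) lam) : ℤ) : ℝ) < 0 := by rw [hkα]; exact hlt
        have h2 : round ((α.comp w.toLinearMap) lam) < 0 := by exact_mod_cast h
        omega
      rw [hIdef]
      simp only [hβ, if_false, Finset.notMem_empty, iff_false]
      rintro (⟨h1, h2⟩ | ⟨h1, h2⟩)
      · exact (hunb α hα n) h1
      · have hn0 := hsmall α hα n h1
        have e2 := h2 (affT (-(w lam)) w v₀) ⟨v₀, hv₀, rfl⟩
        rw [hvalT] at e2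
        have h3 := (C.alcove_mem hv₀ hβneg).2
        simp only [LinearMap.neg_apply] at h3
        have h4 : ((round ((α.comp w.toLinearMap) lam) : ℤ) : ℝ) ≤ -1 := by exact_mod_cast hkneg
        rw [hkα] at h4
        have h5 : (0:ℝ) < (n:ℝ) := by linarith
        have h6 : 0 < n := by exact_mod_cast h5
        omega
  rw [C.sepCount_eq_sum _ _ _ key]
  push_cast
  rw [C.sum_split w (fun α => ((I α).card : ℝ))]
  have e2 : ∑ α ∈ C.Pm w, ((I α).card : ℝ) = 0 := by
    refine Finset.sum_eq_zero fun α hα => ?_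
    rw [hIdef]
    simp [(C.mem_Pm.mp hα).2]
  have e1 : ∑ α ∈ C.Pp w, ((I α).card : ℝ) = ∑ α ∈ C.Pp w, (α.comp w.toLinearMap) lam := by
    refine Finset.sum_congr rfl fun α hα => ?_
    obtain ⟨hαP, hβ⟩ := C.mem_Pp.mp hα
    have hβΦ : α.comp w.toLinearMap ∈ C.Φ := (C.comp_mem_Phi hwW α (C.pos_subset hαP)).1
    have hkα : ((round ((α.comp w.toLinearMap) lam) : ℤ) : ℝ) = (α.comp w.toLinearMap) lam :=
      round_cast_eq (hint _ hβΦ)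
    have hk0 : 0 ≤ round ((α.comp w.toLinearMap) lam) := by
      have h := hdom _ hβ
      rw [← hkα] at h
      exact_mod_cast h
    rw [hIdef]
    simp only [hβ, if_true]
    have h7 : (Finset.Icc (1 - round ((α.comp w.toLinearMap) lam)) 0).card
        = (round ((α.comp w.toLinearMap) lam)).toNat := by
      rw [Int.card_Icc]
      congr 1
      ring
    rw [h7]
    have hfin : (((round ((α.comp w.toLinearMap) lam)).toNat : ℕ) : ℝ) = ((round ((α.comp w.toLinearMap) lam) : ℤ) : ℝ) := by
      exact_mod_cast congrArg (Int.cast : ℤ → ℝ) (Int.toNat_of_nonneg hk0)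
    rw [hfin, hkα]
  rw [e1, e2, add_zero]
  exact Finset.sum_congr rfl fun α _ => rfl

lemma affLen_xw_eq {w : V ≃ₗ[ℝ] V} (hwW : w ∈ C.W) {μ : V}
    (hint : C.IsIntegral μ) (hdom : C.IsDominant μ)
    (hmin : ∀ γ ∈ C.invSet w, γ μ ≠ 0) :
    ((C.affLen (affT (-(w μ)) w) : ℕ) : ℝ) = ∑ α ∈ C.Pos, α μ - (C.len w : ℝ) := by
  classical
  obtain ⟨v₀, hv₀⟩ := C.exists_alcove_vec
  have hvalT : ∀ (α : Dual ℝ V) (a : V),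
      α (affT (-(w μ)) w a) = (α.comp w.toLinearMap) a - (α.comp w.toLinearMap) μ := by
    intro α a
    simp [affT, LinearMap.comp_apply, sub_eq_add_neg]
  set I : Dual ℝ V → Finset ℤ := fun α =>
    if α.comp w.toLinearMap ∈ C.Pos
    then Finset.Icc (1 - round ((α.comp w.toLinearMap) μ)) 0
    else Finset.Icc 1 (-round ((α.comp w.toLinearMap) μ) - 1) with hIdef
  have key : ∀ α ∈ C.Pos, ∀ n : ℤ,
      SepBy α n C.alcove (affT (-(w μ)) w '' C.alcove) ↔ n ∈ I α := by
    intro α hα n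
    have hβΦ : α.comp w.toLinearMap ∈ C.Φ := (C.comp_mem_Phi hwW α (C.pos_subset hα)).1
    have hkα : ((round ((α.comp w.toLinearMap) μ) : ℤ) : ℝ) = (α.comp w.toLinearMap) μ :=
      round_cast_eq (hint _ hβΦ)
    have hmemα := C.alcove_mem hv₀ hα
    by_cases hβ : α.comp w.toLinearMap ∈ C.Pos
    · have hk0 : 0 ≤ round ((α.comp w.toLinearMap) μ) := by
        have h := hdom _ hβ
        rw [← hkα] at h
        exact_mod_cast h
      rw [hIdef]
      simp only [hβ, if_true, Finset.mem_Icc]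
      constructor
      · rintro (⟨h1, h2⟩ | ⟨h1, h2⟩)
        · exfalso
          have e1 := h1 v₀ hv₀
          have e2 := h2 (affT (-(w μ)) w v₀) ⟨v₀, hv₀, rfl⟩
          rw [hvalT] at e2
          have h3 := (C.alcove_mem hv₀ hβ).2
          have h5 : (0:ℝ) < (n:ℝ) := by linarith [hmemα.1]
          have h6 : (n:ℝ) < 1 - ((round ((α.comp w.toLinearMap) μ) : ℤ) : ℝ) := by
            rw [hkα]; linarith
          have h7 : 0 < n := by exact_mod_cast h5
          have h8 : (n:ℝ) < 1 - ((round ((α.comp w.toLinearMap) μ) : ℤ) : ℝ) := h6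
          have h9 : n < 1 - round ((α.comp w.toLinearMap) μ) := by exact_mod_cast h8
          omega
        · constructor
          · have e2 := h2 (affT (-(w μ)) w v₀) ⟨v₀, hv₀, rfl⟩
            rw [hvalT] at e2
            have h3 := (C.alcove_mem hv₀ hβ).1
            have h4 : ((-round ((α.comp w.toLinearMap) μ) : ℤ) : ℝ) < (n:ℝ) := by
              rw [Int.cast_neg, hkα]
              linarith
            have h5 : -round ((α.comp w.toLinearMap) μ) < n := by exact_mod_cast h4
            omega
          · have e1 := h1 v₀ hv₀
            have h4 : (n:ℝ) < 1 := by linarith [hmemα.2]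
            have h5 : n < 1 := by exact_mod_cast h4
            omega
      · rintro ⟨hn1, hn2⟩
        right
        constructor
        · intro v hv
          have h3 := (C.alcove_mem hv hα).1
          have h4 : (n:ℝ) ≤ 0 := by exact_mod_cast hn2
          linarith
        · rintro v ⟨a, ha, rfl⟩
          rw [hvalT]
          have h3 := (C.alcove_mem ha hβ).2
          have h4 : (1:ℝ) - ((round ((α.comp w.toLinearMap) μ) : ℤ) : ℝ) ≤ (n:ℝ) := by
            exact_mod_cast hn1
          rw [hkα] at h4
          linarith
    · have hβneg : -(α.comp w.toLinearMap) ∈ C.Pos := by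
        rcases C.pos_or_neg hβΦ with h' | h'
        · exact absurd h' hβ
        · exact h'
      have hγinv : -(α.comp w.toLinearMap) ∈ C.invSet w := by
        refine C.mem_invSet.mpr ⟨hβneg, ?_⟩
        rw [LinearMap.neg_comp, comp_comp_symm, neg_neg]
        exact hα
      have hne := hmin _ hγinv
      have hle : (α.comp w.toLinearMap) μ ≤ 0 := by
        have h := hdom _ hβneg
        simp only [LinearMap.neg_apply] at h
        linarith
      have hlt : (α.comp w.toLinearMap) μ < 0 := by
        rcases lt_or_eq_of_le hle with h | h
        · exact h
        · exfalso
          apply hne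
          simp only [LinearMap.neg_apply, h]
          ring
      have hkneg : round ((α.comp w.toLinearMap) μ) ≤ -1 := by
        have h : ((round ((α.comp w.toLinearMap) μ) : ℤ) : ℝ) < 0 := by rw [hkα]; exact hlt
        have h2 : round ((α.comp w.toLinearMap) μ) < 0 := by exact_mod_cast h
        omega
      have hv₀β := C.alcove_mem hv₀ hβneg
      simp only [LinearMap.neg_apply] at hv₀β
      rw [hIdef]
      simp only [hβ, if_false, Finset.mem_Icc]
      constructor
      · rintro (⟨h1, h2⟩ | ⟨h1, h2⟩)
        · have e1 := h1 v₀ hv₀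
          have e2 := h2 (affT (-(w μ)) w v₀) ⟨v₀, hv₀, rfl⟩
          rw [hvalT] at e2
          constructor
          · have h5 : (0:ℝ) < (n:ℝ) := lt_trans hmemα.1 e1
            have h6 : 0 < n := by exact_mod_cast h5
            omega
          · have h4 : (n:ℝ) < -((round ((α.comp w.toLinearMap) μ) : ℤ) : ℝ) := by
              rw [hkα]
              linarith [hv₀β.1]
            have h5 : n < -round ((α.comp w.toLinearMap) μ) := by exact_mod_cast h4
            omega
        · exfalso
          have e1 := h1 v₀ hv₀
          have e2 := h2 (affT (-(w μ)) w v₀) ⟨v₀, hv₀, rfl⟩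
          rw [hvalT] at e2
          have h4 : (n:ℝ) < 1 := lt_trans e1 hmemα.2
          have h5 : -1 - ((round ((α.comp w.toLinearMap) μ) : ℤ) : ℝ) < (n:ℝ) := by
            rw [hkα]
            linarith [hv₀β.2]
          have h6 : n < 1 := by exact_mod_cast h4
          have h7 : -1 - round ((α.comp w.toLinearMap) μ) < n := by exact_mod_cast h5
          omega
      · rintro ⟨hn1, hn2⟩
        left
        constructor
        · intro v hv
          have h3 := (C.alcove_mem hv hα).2
          have h4 : (1:ℝ) ≤ (n:ℝ) := by exact_mod_cast hn1
          linarith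
        · rintro v ⟨a, ha, rfl⟩
          rw [hvalT]
          have h3 := C.alcove_mem ha hβneg
          simp only [LinearMap.neg_apply] at h3
          have h4 : (n:ℝ) ≤ -((round ((α.comp w.toLinearMap) μ) : ℤ) : ℝ) - 1 := by
            exact_mod_cast hn2
          rw [hkα] at h4
          linarith [h3.2]
  rw [RootSystemCtx.affLen, C.sepCount_eq_sum _ _ _ key]
  push_cast
  rw [C.sum_split w (fun α => ((I α).card : ℝ))]
  have e1 : ∑ α ∈ C.Pp w, ((I α).card : ℝ) = ∑ α ∈ C.Pp w, (α.comp w.toLinearMap) μ := by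
    refine Finset.sum_congr rfl fun α hα => ?_
    obtain ⟨hαP, hβ⟩ := C.mem_Pp.mp hα
    have hβΦ : α.comp w.toLinearMap ∈ C.Φ := (C.comp_mem_Phi hwW α (C.pos_subset hαP)).1
    have hkα : ((round ((α.comp w.toLinearMap) μ) : ℤ) : ℝ) = (α.comp w.toLinearMap) μ :=
      round_cast_eq (hint _ hβΦ)
    have hk0 : 0 ≤ round ((α.comp w.toLinearMap) μ) := by
      have h := hdom _ hβ
      rw [← hkα] at h
      exact_mod_cast h
    rw [hIdef]
    simp only [hβ, if_true]
    have h7 : (Finset.Icc (1 - round ((α.comp w.toLinearMap) μ)) 0).card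
        = (round ((α.comp w.toLinearMap) μ)).toNat := by
      rw [Int.card_Icc]
      congr 1
      ring
    rw [h7]
    have hfin : (((round ((α.comp w.toLinearMap) μ)).toNat : ℕ) : ℝ) = ((round ((α.comp w.toLinearMap) μ) : ℤ) : ℝ) := by
      exact_mod_cast congrArg (Int.cast : ℤ → ℝ) (Int.toNat_of_nonneg hk0)
    rw [hfin, hkα]
  have e2 : ∑ α ∈ C.Pm w, ((I α).card : ℝ)
      = ∑ α ∈ C.Pm w, (-(α.comp w.toLinearMap) μ - 1) := by
    refine Finset.sum_congr rfl fun α hα => ?_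
    obtain ⟨hαP, hβ⟩ := C.mem_Pm.mp hα
    have hβΦ : α.comp w.toLinearMap ∈ C.Φ := (C.comp_mem_Phi hwW α (C.pos_subset hαP)).1
    have hkα : ((round ((α.comp w.toLinearMap) μ) : ℤ) : ℝ) = (α.comp w.toLinearMap) μ :=
      round_cast_eq (hint _ hβΦ)
    have hβneg : -(α.comp w.toLinearMap) ∈ C.Pos := by
      rcases C.pos_or_neg hβΦ with h' | h'
      · exact absurd h' hβ
      · exact h'
    have hγinv : -(α.comp w.toLinearMap) ∈ C.invSet w := by
      refine C.mem_invSet.mpr ⟨hβneg, ?_⟩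
      rw [LinearMap.neg_comp, comp_comp_symm, neg_neg]
      exact hαP
    have hne := hmin _ hγinv
    have hle : (α.comp w.toLinearMap) μ ≤ 0 := by
      have h := hdom _ hβneg
      simp only [LinearMap.neg_apply] at h
      linarith
    have hlt : (α.comp w.toLinearMap) μ < 0 := by
      rcases lt_or_eq_of_le hle with h | h
      · exact h
      · exfalso
        apply hne
        simp only [LinearMap.neg_apply, h]
        ring
    have hkneg : round ((α.comp w.toLinearMap) μ) ≤ -1 := by
      have h : ((round ((α.comp w.toLinearMap) μ) : ℤ) : ℝ) < 0 := by rw [hkα]; exact hlt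
      have h2 : round ((α.comp w.toLinearMap) μ) < 0 := by exact_mod_cast h
      omega
    rw [hIdef]
    simp only [hβ, if_false]
    have h7 : (Finset.Icc 1 (-round ((α.comp w.toLinearMap) μ) - 1)).card
        = (-round ((α.comp w.toLinearMap) μ) - 1).toNat := by
      rw [Int.card_Icc]
      congr 1
      ring
    rw [h7]
    have h8 : ((( -round ((α.comp w.toLinearMap) μ) - 1).toNat : ℤ) : ℝ)
        = -((round ((α.comp w.toLinearMap) μ) : ℤ) : ℝ) - 1 := by
      rw [Int.toNat_of_nonneg (by omega)]
      push_cast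
      ring
    rw [hkα] at h8
    exact_mod_cast h8
  rw [e1, e2, Finset.sum_sub_distrib, Finset.sum_const, nsmul_eq_mul, mul_one]
  have hsum := C.sum_pos_comp hwW μ
  have hcard : (C.len w : ℝ) = ((C.Pm w).card : ℝ) := by
    exact_mod_cast congrArg (Nat.cast : ℕ → ℝ) (C.card_invSet_eq_Pm hwW)
  rw [Finset.sum_neg_distrib]
  linarith [hsum, hcard]

end RootSystemCtx

end AuxProofs

/-- Let `μ` be a dominant integral coweight and `λ` an integral
coweight with `μ − u(λ)` a `ℤ_{≥0}`-combination of positive coroots for every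
`u ∈ W₀`.  Let `λ_d` be the dominant element of `W₀λ`, `λ = w''(λ_d)` with `w''` the
minimal coset representative, `ℓ^{λ_d}(w'') = Σ_{α ∈ Φ⁺, w''(α) ∈ −Φ⁺} ⟨α, λ_d⟩`,
`ht(μ − λ_d) = ⟨ρ, μ − λ_d⟩`.  Then
`⟨ρ, μ + λ⟩ = ℓ(t_μ) − ht(μ − λ_d) − ℓ^{λ_d}(w'') = ht(μ − λ_d) + N_{λ_d,w''}`, and
for every minimal coset representative `w` for `μ`,
`ℓ(x_w) − ⟨ρ, μ + λ⟩ = ht(μ − λ_d) + ℓ^{λ_d}(w'') − ℓ(w)`. -/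
theorem appendix_length_identities
    {V : Type*} [AddCommGroup V] [Module ℝ V] [FiniteDimensional ℝ V]
    (C : RootSystemCtx V) (μ : V)
    (hμint : C.IsIntegral μ) (hμdom : C.IsDominant μ)
    (lam : V) (hlint : C.IsIntegral lam)
    (hcomb : ∀ u ∈ C.W, ∃ c : Module.Dual ℝ V → ℕ,
      μ - u lam = ∑ α ∈ C.Pos, (c α : ℝ) • C.coroot α)
    (lamd : V) (hlamd_dom : C.IsDominant lamd)
    (hlamd_orb : ∃ u ∈ C.W, u lam = lamd)
    (w'' : V ≃ₗ[ℝ] V) (hw'' : C.IsMinRep w'' lamd) (hlam_eq : lam = w'' lamd) :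
    C.rho (μ + lam)
        = (C.affLen (affT μ 1) : ℝ) - C.rho (μ - lamd) - ∑ α ∈ C.invSet w'', α lamd ∧
    C.rho (μ + lam)
        = C.rho (μ - lamd)
          + (C.sepCount C.chamber (affT (-(w'' lamd)) w'' '' C.alcove) : ℝ) ∧
    ∀ w : V ≃ₗ[ℝ] V, C.IsMinRep w μ →
      (C.affLen (affT (-(w μ)) w) : ℝ) - C.rho (μ + lam)
        = C.rho (μ - lamd) + (∑ α ∈ C.invSet w'', α lamd) - (C.len w : ℝ) := by
  classical
  obtain ⟨u, huW, hulam⟩ := hlamd_orb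
  have hlamdint : C.IsIntegral lamd := by
    intro β hβ
    obtain ⟨n, hn⟩ := hlint (β.comp u.toLinearMap) ((C.comp_mem_Phi huW β hβ).1)
    refine ⟨n, ?_⟩
    rw [← hulam]
    exact hn
  have hmin'' : ∀ γ ∈ C.invSet w'', γ lamd ≠ 0 := fun γ hγ => C.minrep_inv_ne_zero hw'' hγ
  have E1 : ((C.affLen (affT μ 1) : ℕ) : ℝ) = ∑ α ∈ C.Pos, α μ := C.affLen_transl hμint hμdom
  have E2 : ((C.sepCount C.chamber (affT (-(w'' lamd)) w'' '' C.alcove) : ℕ) : ℝ)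
      = ∑ α ∈ C.Pp w'', (α.comp w''.toLinearMap) lamd :=
    C.sepCount_chamber_eq hw''.1 hlamdint hlamd_dom hmin''
  have S2 := C.sum_pos_comp hw''.1 lamd
  have S1 := C.sum_split w'' (fun α => (α.comp w''.toLinearMap) lamd)
  have SI := C.sum_invSet_eq hw''.1 lamd
  have R1 : C.rho (μ + lam)
      = 2⁻¹ * (∑ α ∈ C.Pos, α μ) + 2⁻¹ * (∑ α ∈ C.Pos, (α.comp w''.toLinearMap) lamd) := by
    rw [C.rho_apply]
    have h : ∑ α ∈ C.Pos, α (μ + lam)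
        = ∑ α ∈ C.Pos, (α μ + (α.comp w''.toLinearMap) lamd) := by
      refine Finset.sum_congr rfl fun α _ => ?_
      rw [map_add, hlam_eq]
      rfl
    rw [h, Finset.sum_add_distrib]
    ring
  have R2 : C.rho (μ - lamd)
      = 2⁻¹ * (∑ α ∈ C.Pos, α μ) - 2⁻¹ * (∑ α ∈ C.Pos, α lamd) := by
    rw [C.rho_apply]
    have h : ∑ α ∈ C.Pos, α (μ - lamd) = ∑ α ∈ C.Pos, (α μ - α lamd) :=
      Finset.sum_congr rfl fun α _ => map_sub α μ lamd
    rw [h, Finset.sum_sub_distrib]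
    ring
  refine ⟨?_, ?_, ?_⟩
  · rw [R1, R2, E1]
    linarith [S1, S2, SI]
  · rw [R1, R2, E2]
    linarith [S1, S2]
  · intro w hw
    have hminw : ∀ γ ∈ C.invSet w, γ μ ≠ 0 := fun γ hγ => C.minrep_inv_ne_zero hw hγ
    have E3 := C.affLen_xw_eq hw.1 hμint hμdom hminw
    rw [E3, R1, R2]
    linarith [S1, S2, SI]
end

section
/- Let μ be a dominant integral coweight, let w₁ ∈ W₀ be a minimal coset representative for μ, and let w_* ∈ W₀ be the unique element such that the alcove −μ + A is contained in the Weyl chamber w_*(C). Then ℓ(t_{−w₁(μ)}w₁) = ℓ(w₁w_*) + ℓ(w_*^{−1}t_{−μ}), where ℓ(w₁w_*) is the length in W₀ (the number of α ∈ Φ⁺ with (w₁w_*)(α) ∈ −Φ⁺), and the other two lengths are the separating-hyperplane counts for the corresponding affine transformations (here w_*^{−1}t_{−μ} is the affine map v ↦ w_*^{−1}(v) − w_*^{−1}(μ)). -/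
/-!
Common framework: a finite crystallographic reduced root system `Φ` inside the dual
of a finite-dimensional real vector space `V`, with a choice of positive roots `Pos`,
simple roots `Delta`, coroots, and the finite Weyl group `W` (a subgroup of linear
automorphisms of `V` generated by the root reflections).  We also set up affine
hyperplanes, the fundamental alcove, separation counts, and alcove walks.
-/

open Module Finset

section AuxDev

open Module Finset

variable {V : Type*} [AddCommGroup V] [Module ℝ V]

lemma dAct_apply (w : V ≃ₗ[ℝ] V) (α : Dual ℝ V) (v : V) :
    dAct w α v = α (w.symm v) := rfl

lemma dAct_inv_apply (w : V ≃ₗ[ℝ] V) (α : Dual ℝ V) (v : V) :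
    dAct w⁻¹ α v = α (w v) := rfl

lemma dAct_one (α : Dual ℝ V) : dAct (1 : V ≃ₗ[ℝ] V) α = α := by ext v; rfl

lemma dAct_mul (u w : V ≃ₗ[ℝ] V) (α : Dual ℝ V) :
    dAct (u * w) α = dAct u (dAct w α) := by ext v; rfl

lemma dAct_neg (w : V ≃ₗ[ℝ] V) (α : Dual ℝ V) : dAct w (-α) = -dAct w α := by
  ext v; simp [dAct_apply]

lemma dAct_add (w : V ≃ₗ[ℝ] V) (α β : Dual ℝ V) :
    dAct w (α + β) = dAct w α + dAct w β := by ext v; simp [dAct_apply]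

lemma dAct_smul (w : V ≃ₗ[ℝ] V) (c : ℝ) (α : Dual ℝ V) :
    dAct w (c • α) = c • dAct w α := by ext v; simp [dAct_apply]

lemma dAct_dAct_inv (w : V ≃ₗ[ℝ] V) (α : Dual ℝ V) : dAct w (dAct w⁻¹ α) = α := by
  rw [← dAct_mul, mul_inv_cancel, dAct_one]

lemma dAct_inv_dAct (w : V ≃ₗ[ℝ] V) (α : Dual ℝ V) : dAct w⁻¹ (dAct w α) = α := by
  rw [← dAct_mul, inv_mul_cancel, dAct_one]

lemma dAct_injective (w : V ≃ₗ[ℝ] V) : Function.Injective (dAct w) := fun a b h => by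
  have h2 := congrArg (dAct w⁻¹) h
  rwa [dAct_inv_dAct, dAct_inv_dAct] at h2

namespace RootSystemCtx

variable [FiniteDimensional ℝ V] (C : RootSystemCtx V)

lemma neg_not_pos {α : Dual ℝ V} (h : α ∈ C.Pos) : -α ∉ C.Pos := by
  rcases C.pos_partition α (C.pos_subset h) with ⟨_, h2⟩ | ⟨_, h2⟩
  · exact h2
  · exact absurd h h2

lemma pos_or_neg_pos {α : Dual ℝ V} (h : α ∈ C.Φ) : α ∈ C.Pos ∨ -α ∈ C.Pos := by
  rcases C.pos_partition α h with ⟨h1, _⟩ | ⟨h1, _⟩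
  · exact Or.inl h1
  · exact Or.inr h1

lemma neg_pos_of_not_pos {α : Dual ℝ V} (hΦ : α ∈ C.Φ) (h : α ∉ C.Pos) : -α ∈ C.Pos :=
  (C.pos_or_neg_pos hΦ).resolve_left h

lemma dAct_mem_phi {w : V ≃ₗ[ℝ] V} (hw : w ∈ C.W) {β : Dual ℝ V} (hβ : β ∈ C.Φ) :
    dAct w β ∈ C.Φ := by
  rw [C.W_gen] at hw
  have H : ∀ β ∈ C.Φ, dAct w β ∈ C.Φ ∧ dAct w⁻¹ β ∈ C.Φ := by
    refine Subgroup.closure_induction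
      (p := fun g _ => ∀ β ∈ C.Φ, dAct g β ∈ C.Φ ∧ dAct g⁻¹ β ∈ C.Φ) ?_ ?_ ?_ ?_ hw
    · rintro g ⟨γ, hγ, hg⟩ β hβ
      have h2 : ∀ u, γ (g u) = - γ u := by
        intro u
        rw [hg, map_sub, map_smul, smul_eq_mul, C.coroot_self γ hγ]
        ring
      have hinvol : ∀ u, g (g u) = u := by
        intro u
        rw [hg (g u), h2, hg u, neg_smul]
        abel
      have hsymm : g.symm = g := by
        ext v
        have h3 : g.symm (g (g v)) = g.symm v := by rw [hinvol]
        rw [g.symm_apply_apply] at h3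
        exact h3.symm
      have hginv : g⁻¹ = g := by
        show g.symm = g
        exact hsymm
      have hd : ∀ δ : Dual ℝ V, δ ∈ C.Φ → dAct g δ ∈ C.Φ := by
        intro δ hδ
        have : dAct g δ = δ - δ (C.coroot γ) • γ := by
          ext v
          rw [dAct_apply, hsymm, hg, map_sub, map_smul]
          simp [smul_eq_mul, mul_comm]
        rw [this]
        exact C.root_reflect_mem γ hγ δ hδ
      exact ⟨hd β hβ, by rw [hginv]; exact hd β hβ⟩
    · intro β hβ
      rw [inv_one, dAct_one]
      exact ⟨hβ, hβ⟩
    · intro x y hx hy px py β hβ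
      refine ⟨?_, ?_⟩
      · rw [dAct_mul]
        exact (px _ (py β hβ).1).1
      · rw [mul_inv_rev, dAct_mul]
        exact (py _ ((px β hβ).2)).2
    · intro x hx px β hβ
      rw [inv_inv]
      exact ⟨(px β hβ).2, (px β hβ).1⟩
  exact (H β hβ).1

open Classical in
noncomputable def aw (w : V ≃ₗ[ℝ] V) (α : Dual ℝ V) : Dual ℝ V :=
  if dAct w α ∈ C.Pos then dAct w α else -dAct w α

lemma aw_of_pos {w : V ≃ₗ[ℝ] V} {α : Dual ℝ V} (h : dAct w α ∈ C.Pos) :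
    C.aw w α = dAct w α := by
  unfold aw; rw [if_pos h]

lemma aw_of_neg {w : V ≃ₗ[ℝ] V} {α : Dual ℝ V} (h : dAct w α ∉ C.Pos) :
    C.aw w α = -dAct w α := by
  unfold aw; rw [if_neg h]

lemma aw_mem {w : V ≃ₗ[ℝ] V} (hw : w ∈ C.W) {α : Dual ℝ V} (hα : α ∈ C.Pos) :
    C.aw w α ∈ C.Pos := by
  by_cases h : dAct w α ∈ C.Pos
  · rw [C.aw_of_pos h]; exact h
  · rw [C.aw_of_neg h]
    exact C.neg_pos_of_not_pos (C.dAct_mem_phi hw (C.pos_subset hα)) h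

lemma aw_aw {w : V ≃ₗ[ℝ] V} {α : Dual ℝ V} (hα : α ∈ C.Pos) :
    C.aw w⁻¹ (C.aw w α) = α := by
  by_cases h : dAct w α ∈ C.Pos
  · rw [C.aw_of_pos h, C.aw_of_pos (by rw [dAct_inv_dAct]; exact hα)]
    exact dAct_inv_dAct w α
  · rw [C.aw_of_neg h, C.aw_of_neg (by rw [dAct_neg, dAct_inv_dAct]; exact C.neg_not_pos hα)]
    rw [dAct_neg, dAct_inv_dAct, neg_neg]

lemma aw_aw' {w : V ≃ₗ[ℝ] V} {α : Dual ℝ V} (hα : α ∈ C.Pos) :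
    C.aw w (C.aw w⁻¹ α) = α := by
  have := C.aw_aw (w := w⁻¹) hα
  rwa [inv_inv] at this

lemma exists_delta_one : ∃ v : V, ∀ δ ∈ C.Delta, δ v = 1 := by
  classical
  set T : V →ₗ[ℝ] ({a : Dual ℝ V // a ∈ C.Delta} → ℝ) :=
    LinearMap.pi (fun δ => δ.1) with hT
  have hsurj : Function.Surjective T := by
    rw [← LinearMap.range_eq_top]
    by_contra hne
    have hlt : LinearMap.range T < ⊤ := lt_top_iff_ne_top.2 hne
    obtain ⟨f, hf0, hfbot⟩ := Submodule.exists_dual_map_eq_bot_of_lt_top hlt inferInstance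
    set c : {a : Dual ℝ V // a ∈ C.Delta} → ℝ :=
      fun δ => f (fun j => if δ = j then 1 else 0) with hcdef
    have hfx : ∀ x, f x = ∑ δ, x δ * c δ := by
      intro x
      conv_lhs => rw [pi_eq_sum_univ x]
      rw [map_sum]
      exact Finset.sum_congr rfl fun δ _ => by rw [map_smul, smul_eq_mul]
    have hG : ∀ v : V, ∑ δ : {a : Dual ℝ V // a ∈ C.Delta}, c δ * δ.1 v = 0 := by
      intro v
      have hmem : f (T v) ∈ Submodule.map f (LinearMap.range T) :=
        ⟨T v, ⟨v, rfl⟩, rfl⟩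
      rw [hfbot] at hmem
      have h0 : f (T v) = 0 := by simpa using hmem
      rw [hfx] at h0
      rw [← h0]
      exact Finset.sum_congr rfl fun δ _ => by
        rw [mul_comm]
        rfl
    have hc : ∀ δ, c δ = 0 := by
      have hind := Fintype.linearIndependent_iff.1 C.delta_indep c
      apply hind
      ext v
      simpa using hG v
    apply hf0
    refine LinearMap.ext fun x => ?_
    rw [hfx]
    simp [hc]
  obtain ⟨v, hv⟩ := hsurj (fun _ => 1)
  refine ⟨v, fun δ hδ => ?_⟩
  have := congrFun hv ⟨δ, hδ⟩
  simpa [hT] using this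

lemma alcove_nonempty : ∃ v, v ∈ C.alcove := by
  classical
  obtain ⟨v₁, hv₁⟩ := C.exists_delta_one
  have hpos : ∀ α ∈ C.Pos, 0 < α v₁ := by
    intro α hα
    obtain ⟨c, hc⟩ := C.pos_of_delta α hα
    have hval : α v₁ = ∑ β ∈ C.Delta, (c β : ℝ) := by
      rw [hc, LinearMap.sum_apply]
      exact Finset.sum_congr rfl fun β hβ => by
        rw [LinearMap.smul_apply, smul_eq_mul, hv₁ β hβ, mul_one]
    have hnn : (0:ℝ) ≤ α v₁ := by
      rw [hval]; exact Finset.sum_nonneg fun β _ => by positivity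
    rcases eq_or_lt_of_le hnn with heq | hlt
    · exfalso
      apply C.root_ne_zero α (C.pos_subset hα)
      have hall : ∀ β ∈ C.Delta, (c β : ℝ) = 0 := by
        rw [hval] at heq
        intro β hβ
        exact (Finset.sum_eq_zero_iff_of_nonneg (fun β _ => by positivity)).1 heq.symm β hβ
      rw [hc]
      apply Finset.sum_eq_zero
      intro β hβ
      rw [hall β hβ, zero_smul]
    · exact hlt
  set S : ℝ := ∑ α ∈ C.Pos, α v₁ with hS
  have hSnn : (0:ℝ) ≤ S := Finset.sum_nonneg fun α hα => (hpos α hα).le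
  have hS1 : (0:ℝ) < S + 1 := by linarith
  refine ⟨(S+1)⁻¹ • v₁, fun α hα => ?_⟩
  have h1 : α ((S+1)⁻¹ • v₁) = (S+1)⁻¹ * α v₁ := by rw [map_smul, smul_eq_mul]
  have hle : α v₁ ≤ S := Finset.single_le_sum (fun β hβ => (hpos β hβ).le) hα
  constructor
  · rw [h1]; exact mul_pos (inv_pos.2 hS1) (hpos α hα)
  · rw [h1]
    calc (S+1)⁻¹ * α v₁ < (S+1)⁻¹ * (S+1) :=
          mul_lt_mul_of_pos_left (by linarith) (inv_pos.2 hS1)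
    _ = 1 := inv_mul_cancel₀ hS1.ne'

lemma smul_mem_alcove {v : V} (hv : v ∈ C.alcove) {t : ℝ} (h0 : 0 < t) (h1 : t ≤ 1) :
    t • v ∈ C.alcove := by
  intro α hα
  obtain ⟨ha, hb⟩ := hv α hα
  have h2 : α (t • v) = t * α v := by rw [map_smul, smul_eq_mul]
  rw [h2]
  constructor
  · exact mul_pos h0 ha
  · nlinarith

lemma forall_gt_iff {α : Dual ℝ V} (hα : α ∈ C.Pos) (n : ℤ) :
    (∀ v ∈ C.alcove, (n:ℝ) < α v) ↔ n ≤ 0 := by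
  constructor
  · intro H
    by_contra hn
    push_neg at hn
    have hn1 : (1:ℝ) ≤ (n:ℝ) := by exact_mod_cast hn
    obtain ⟨v₀, hv₀⟩ := C.alcove_nonempty
    have hp := (hv₀ α hα).1
    set t : ℝ := (α v₀ + 1)⁻¹ with ht
    have ht0 : 0 < t := by rw [ht]; positivity
    have ht1 : t ≤ 1 := by
      rw [ht]
      rw [inv_le_one_iff₀]
      right; linarith
    have hmem := C.smul_mem_alcove hv₀ ht0 ht1
    have hH := H _ hmem
    have hlt : α (t • v₀) < 1 := by
      rw [map_smul, smul_eq_mul]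
      calc t * α v₀ < t * (α v₀ + 1) := by nlinarith
      _ = 1 := by rw [ht]; exact inv_mul_cancel₀ (by linarith)
    linarith
  · intro hn v hv
    have h0 := (hv α hα).1
    have : (n:ℝ) ≤ 0 := by exact_mod_cast hn
    linarith

lemma forall_lt_iff {α : Dual ℝ V} (hα : α ∈ C.Pos) (n : ℤ) :
    (∀ v ∈ C.alcove, α v < (n:ℝ)) ↔ 1 ≤ n := by
  constructor
  · intro H
    obtain ⟨v₀, hv₀⟩ := C.alcove_nonempty
    have h1 := H v₀ hv₀
    have h2 := (hv₀ α hα).1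
    have h3 : (0:ℝ) < (n:ℝ) := by linarith
    have h4 : (0:ℤ) < n := by exact_mod_cast h3
    omega
  · intro hn v hv
    have h2 := (hv α hα).2
    have : (1:ℝ) ≤ (n:ℝ) := by exact_mod_cast hn
    linarith


open Classical in
lemma sepBy_iff {u : V ≃ₗ[ℝ] V} (hu : u ∈ C.W) {α : Dual ℝ V} (hα : α ∈ C.Pos)
    {ν : V} {m : ℤ} (hm : α ν = (m:ℝ)) (n : ℤ) :
    SepBy α n C.alcove (affT ν u '' C.alcove) ↔
      (if dAct u⁻¹ α ∈ C.Pos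
       then (1 ≤ n ∧ n ≤ m) ∨ (n ≤ 0 ∧ m + 1 ≤ n)
       else (1 ≤ n ∧ n ≤ m - 1) ∨ (n ≤ 0 ∧ m ≤ n)) := by
  classical
  have key : ∀ v : V, α (affT ν u v) = dAct u⁻¹ α v + (m:ℝ) := by
    intro v
    show α (u v + ν) = _
    rw [map_add, hm, dAct_inv_apply]
  have himg : ∀ (P : ℝ → Prop),
      (∀ x ∈ affT ν u '' C.alcove, P (α x)) ↔
        (∀ v ∈ C.alcove, P (dAct u⁻¹ α v + (m:ℝ))) := by
    intro P
    constructor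
    · intro H v hv
      have h1 := H (affT ν u v) ⟨v, hv, rfl⟩
      rwa [key v] at h1
    · rintro H x ⟨v, hv, rfl⟩
      rw [key v]
      exact H v hv
  have hS1 : (∀ v ∈ C.alcove, α v < (n:ℝ)) ↔ 1 ≤ n := C.forall_lt_iff hα n
  have hS2 : (∀ v ∈ C.alcove, (n:ℝ) < α v) ↔ n ≤ 0 := C.forall_gt_iff hα n
  by_cases hc : dAct u⁻¹ α ∈ C.Pos
  · have hT1 : (∀ x ∈ affT ν u '' C.alcove, (n:ℝ) < α x) ↔ n ≤ m := by
      rw [himg]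
      constructor
      · intro H
        have h2 : ∀ v ∈ C.alcove, ((n - m : ℤ):ℝ) < dAct u⁻¹ α v := by
          intro v hv
          have h3 := H v hv
          push_cast
          linarith
        have h4 := (C.forall_gt_iff hc (n - m)).1 h2
        omega
      · intro hnm v hv
        have h3 := (C.forall_gt_iff hc (n - m)).2 (by omega) v hv
        push_cast at h3
        linarith
    have hT2 : (∀ x ∈ affT ν u '' C.alcove, α x < (n:ℝ)) ↔ m + 1 ≤ n := by
      refine Iff.trans (himg fun y => y < (n:ℝ)) ?_
      constructor
      · intro H
        have h2 : ∀ v ∈ C.alcove, dAct u⁻¹ α v < ((n - m : ℤ):ℝ) := by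
          intro v hv
          have h3 := H v hv
          push_cast
          linarith
        have h4 := (C.forall_lt_iff hc (n - m)).1 h2
        omega
      · intro hnm v hv
        have h3 := (C.forall_lt_iff hc (n - m)).2 (by omega) v hv
        push_cast at h3
        linarith
    rw [if_pos hc]
    unfold SepBy
    rw [hS1, hS2, hT1, hT2]
  · have hd : -(dAct u⁻¹ α) ∈ C.Pos :=
      C.neg_pos_of_not_pos (C.dAct_mem_phi (inv_mem hu) (C.pos_subset hα)) hc
    have hT1 : (∀ x ∈ affT ν u '' C.alcove, (n:ℝ) < α x) ↔ n ≤ m - 1 := by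
      refine Iff.trans (himg fun y => (n:ℝ) < y) ?_
      constructor
      · intro H
        have h2 : ∀ v ∈ C.alcove, (-(dAct u⁻¹ α)) v < ((m - n : ℤ):ℝ) := by
          intro v hv
          have h3 := H v hv
          rw [LinearMap.neg_apply]
          push_cast
          linarith
        have h4 := (C.forall_lt_iff hd (m - n)).1 h2
        omega
      · intro hnm v hv
        have h3 := (C.forall_lt_iff hd (m - n)).2 (by omega) v hv
        rw [LinearMap.neg_apply] at h3
        push_cast at h3
        linarith
    have hT2 : (∀ x ∈ affT ν u '' C.alcove, α x < (n:ℝ)) ↔ m ≤ n := by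
      refine Iff.trans (himg fun y => y < (n:ℝ)) ?_
      constructor
      · intro H
        have h2 : ∀ v ∈ C.alcove, ((m - n : ℤ):ℝ) < (-(dAct u⁻¹ α)) v := by
          intro v hv
          have h3 := H v hv
          rw [LinearMap.neg_apply]
          push_cast
          linarith
        have h4 := (C.forall_gt_iff hd (m - n)).1 h2
        omega
      · intro hnm v hv
        have h3 := (C.forall_gt_iff hd (m - n)).2 (by omega) v hv
        rw [LinearMap.neg_apply] at h3
        push_cast at h3
        linarith
    rw [if_neg hc]
    unfold SepBy
    rw [hS1, hS2, hT1, hT2]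

open Classical in
lemma affLen_eq_sum {u : V ≃ₗ[ℝ] V} (hu : u ∈ C.W) (ν : V) (mz : Dual ℝ V → ℤ)
    (hm : ∀ α ∈ C.Pos, α ν = (mz α : ℝ)) :
    C.affLen (affT ν u) = ∑ α ∈ C.Pos,
      (if dAct u⁻¹ α ∈ C.Pos then (mz α).toNat + (-(mz α)).toNat
       else (mz α - 1).toNat + (1 - mz α).toNat) := by
  classical
  set lo : Dual ℝ V → ℤ := fun α => if dAct u⁻¹ α ∈ C.Pos then mz α + 1 else mz α with hlo
  set hi : Dual ℝ V → ℤ := fun α => if dAct u⁻¹ α ∈ C.Pos then mz α else mz α - 1 with hhi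
  set F : Finset (Dual ℝ V × ℤ) := C.Pos.biUnion (fun α =>
    ((Finset.Icc 1 (hi α)) ∪ (Finset.Icc (lo α) 0)).map
      ⟨fun n => (α, n), fun a b h => by simpa using h⟩) with hF
  have hmemF : ∀ (α : Dual ℝ V) (n : ℤ), (α, n) ∈ F ↔
      (α ∈ C.Pos ∧ (n ∈ Finset.Icc 1 (hi α) ∨ n ∈ Finset.Icc (lo α) 0)) := by
    intro α n
    rw [hF]
    simp only [Finset.mem_biUnion, Finset.mem_map, Function.Embedding.coeFn_mk,
      Finset.mem_union, Prod.mk.injEq]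
    constructor
    · rintro ⟨β, hβ, k, hk, hEq⟩
      have hEq' : (β, k) = (α, n) := hEq
      obtain ⟨hβα, hkn⟩ := Prod.mk.inj hEq'
      subst hβα; subst hkn
      exact ⟨hβ, hk⟩
    · rintro ⟨hα, hn⟩
      exact ⟨α, hα, n, hn, rfl⟩
  have hset : {p : Dual ℝ V × ℤ | p.1 ∈ C.Pos ∧ SepBy p.1 p.2 C.alcove (affT ν u '' C.alcove)}
      = ↑F := by
    ext ⟨α, n⟩
    rw [Set.mem_setOf_eq, Finset.mem_coe, hmemF]
    simp only [Finset.mem_Icc]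
    constructor
    · rintro ⟨hα, hsep⟩
      refine ⟨hα, ?_⟩
      rw [C.sepBy_iff hu hα (hm α hα) n] at hsep
      by_cases hc : dAct u⁻¹ α ∈ C.Pos
      · rw [if_pos hc] at hsep
        simp only [hlo, hhi, if_pos hc]
        omega
      · rw [if_neg hc] at hsep
        simp only [hlo, hhi, if_neg hc]
        omega
    · rintro ⟨hα, hn⟩
      refine ⟨hα, ?_⟩
      rw [C.sepBy_iff hu hα (hm α hα) n]
      by_cases hc : dAct u⁻¹ α ∈ C.Pos
      · rw [if_pos hc]
        simp only [hlo, hhi, if_pos hc] at hn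
        omega
      · rw [if_neg hc]
        simp only [hlo, hhi, if_neg hc] at hn
        omega
  have hdisj : ∀ a ∈ C.Pos, ∀ b ∈ C.Pos, a ≠ b →
      Disjoint
        (((Finset.Icc 1 (hi a)) ∪ (Finset.Icc (lo a) 0)).map
          ⟨fun n => (a, n), fun x y h => by simpa using h⟩)
        (((Finset.Icc 1 (hi b)) ∪ (Finset.Icc (lo b) 0)).map
          ⟨fun n => (b, n), fun x y h => by simpa using h⟩) := by
    intro a _ b _ hab
    rw [Finset.disjoint_left]
    rintro ⟨x, k⟩ hx hy
    simp only [Finset.mem_map, Function.Embedding.coeFn_mk, Prod.mk.injEq] at hx hy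
    obtain ⟨n₁, _, h1⟩ := hx
    obtain ⟨n₂, _, h2⟩ := hy
    have e1 : (a, n₁) = (x, k) := h1
    have e2 : (b, n₂) = (x, k) := h2
    exact hab ((Prod.mk.inj e1).1.trans (Prod.mk.inj e2).1.symm)
  have h0 : C.affLen (affT ν u) = Set.ncard
      {p : Dual ℝ V × ℤ | p.1 ∈ C.Pos ∧ SepBy p.1 p.2 C.alcove (affT ν u '' C.alcove)} := rfl
  rw [h0, hset, Set.ncard_coe_finset, hF, Finset.card_biUnion hdisj]
  refine Finset.sum_congr rfl fun α hα => ?_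
  rw [Finset.card_map,
    Finset.card_union_of_disjoint (by
      rw [Finset.disjoint_left]
      intro k h1 h2
      rw [Finset.mem_Icc] at h1 h2
      omega),
    Int.card_Icc, Int.card_Icc]
  by_cases hc : dAct u⁻¹ α ∈ C.Pos
  · simp only [hlo, hhi, if_pos hc]
    omega
  · simp only [hlo, hhi, if_neg hc]
    omega

open Classical in
lemma len_mul_refl_lt {w : V ≃ₗ[ℝ] V} (hw : w ∈ C.W) {γ : Dual ℝ V} (hγ : γ ∈ C.Pos)
    {g : V ≃ₗ[ℝ] V} (hgW : g ∈ C.W)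
    (hgd : ∀ β : Dual ℝ V, dAct g β = β - β (C.coroot γ) • γ)
    (hinv : -(dAct w γ) ∈ C.Pos) :
    C.len (w * g) < C.len w := by
  classical
  have hγΦ : γ ∈ C.Φ := C.pos_subset hγ
  have h2 : γ (C.coroot γ) = 2 := C.coroot_self γ hγΦ
  have hgg : ∀ β : Dual ℝ V, dAct g (dAct g β) = β := by
    intro β
    rw [hgd, hgd]
    ext v
    simp only [LinearMap.sub_apply, LinearMap.smul_apply, map_sub, map_smul, smul_eq_mul, h2]
    ring
  have hdgγ : dAct g γ = -γ := by
    rw [hgd]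
    ext v
    simp only [LinearMap.sub_apply, LinearMap.smul_apply, LinearMap.neg_apply, smul_eq_mul, h2]
    ring
  obtain ⟨v₀, hv₀⟩ := C.alcove_nonempty
  set Inv : Finset (Dual ℝ V) := C.invSet w with hInvDef
  have hInvMem : ∀ β, β ∈ Inv ↔ (β ∈ C.Pos ∧ -(dAct w β) ∈ C.Pos) := by
    intro β
    rw [hInvDef]
    unfold invSet
    rw [Finset.mem_filter]
  set D : Finset (Dual ℝ V) := C.Pos.filter (fun β => -(dAct g β) ∈ C.Pos) with hDdef
  have hDMem : ∀ β, β ∈ D ↔ (β ∈ C.Pos ∧ -(dAct g β) ∈ C.Pos) := by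
    intro β
    rw [hDdef, Finset.mem_filter]
  have hγD : γ ∈ D := (hDMem γ).2 ⟨hγ, by rw [hdgγ, neg_neg]; exact hγ⟩
  have hγInv : γ ∈ Inv := (hInvMem γ).2 ⟨hγ, hinv⟩
  have hdich : ∀ β ∈ C.Pos, dAct g β ∈ C.Pos ∨ -(dAct g β) ∈ C.Pos := fun β hβ =>
    C.pos_or_neg_pos (C.dAct_mem_phi hgW (C.pos_subset hβ))
  have hdichw : ∀ β ∈ C.Pos, dAct w β ∈ C.Pos ∨ -(dAct w β) ∈ C.Pos := fun β hβ =>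
    C.pos_or_neg_pos (C.dAct_mem_phi hw (C.pos_subset hβ))
  have himg : C.invSet (w * g) =
      ((Inv \ D).image (dAct g)) ∪ ((D \ Inv).image (fun β => -(dAct g β))) := by
    ext α
    unfold invSet
    rw [Finset.mem_filter, Finset.mem_union, Finset.mem_image, Finset.mem_image]
    constructor
    · rintro ⟨hα, hneg⟩
      rw [dAct_mul] at hneg
      by_cases hc : dAct g α ∈ C.Pos
      · left
        refine ⟨dAct g α,
          Finset.mem_sdiff.2 ⟨(hInvMem _).2 ⟨hc, hneg⟩, ?_⟩, hgg α⟩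
        intro hmem
        have h3 := ((hDMem _).1 hmem).2
        rw [hgg] at h3
        exact C.neg_not_pos hα h3
      · right
        have hβpos : -(dAct g α) ∈ C.Pos := (hdich α hα).resolve_left hc
        refine ⟨-(dAct g α), Finset.mem_sdiff.2 ⟨(hDMem _).2 ⟨hβpos, ?_⟩, ?_⟩, ?_⟩
        · rw [dAct_neg, hgg, neg_neg]
          exact hα
        · intro hmem
          have hx := ((hInvMem _).1 hmem).2
          rw [dAct_neg, neg_neg] at hx
          exact C.neg_not_pos hx hneg
        · rw [dAct_neg, hgg, neg_neg]
    · rintro (⟨β, hβmem, rfl⟩ | ⟨β, hβmem, rfl⟩)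
      · obtain ⟨hβInv, hβD⟩ := Finset.mem_sdiff.1 hβmem
        obtain ⟨hβpos, hβw⟩ := (hInvMem β).1 hβInv
        have hgβpos : dAct g β ∈ C.Pos := by
          rcases hdich β hβpos with h | h
          · exact h
          · exact absurd ((hDMem β).2 ⟨hβpos, h⟩) hβD
        refine ⟨hgβpos, ?_⟩
        rw [dAct_mul, hgg]
        exact hβw
      · obtain ⟨hβD, hβInv⟩ := Finset.mem_sdiff.1 hβmem
        obtain ⟨hβpos, hβg⟩ := (hDMem β).1 hβD
        have hβwpos : dAct w β ∈ C.Pos := by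
          rcases hdichw β hβpos with h | h
          · exact h
          · exact absurd ((hInvMem β).2 ⟨hβpos, h⟩) hβInv
        refine ⟨hβg, ?_⟩
        rw [dAct_mul, dAct_neg, hgg, dAct_neg, neg_neg]
        exact hβwpos
  have hinj : Function.Injective (dAct g) := dAct_injective g
  have hinj2 : Function.Injective (fun β : Dual ℝ V => -(dAct g β)) := by
    intro a b hab
    simp only at hab
    exact hinj (neg_injective hab)
  have hdisjU : Disjoint ((Inv \ D).image (dAct g)) ((D \ Inv).image (fun β => -(dAct g β))) := by
    rw [Finset.disjoint_left]
    intro a ha hb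
    obtain ⟨β, hβ, rfl⟩ := Finset.mem_image.1 ha
    obtain ⟨δ, hδ, hEq⟩ := Finset.mem_image.1 hb
    obtain ⟨hβInv, _⟩ := Finset.mem_sdiff.1 hβ
    obtain ⟨hδD, _⟩ := Finset.mem_sdiff.1 hδ
    have hβδ : β = -δ := by
      apply hinj
      rw [dAct_neg]
      exact hEq.symm
    have hβpos := ((hInvMem β).1 hβInv).1
    have hδpos := ((hDMem δ).1 hδD).1
    rw [hβδ] at hβpos
    exact C.neg_not_pos hδpos hβpos
  have hcard1 : (C.invSet (w * g)).card = (Inv \ D).card + (D \ Inv).card := by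
    rw [himg, Finset.card_union_of_disjoint hdisjU,
      Finset.card_image_of_injective _ hinj, Finset.card_image_of_injective _ hinj2]
  have hpairInv : ∀ β, β ∈ D.erase γ → β ∉ Inv →
      (-(dAct g β) ∈ Inv ∧ -(dAct g β) ∈ D.erase γ) := by
    intro β hβK hβInv
    obtain ⟨hβne, hβD⟩ := Finset.mem_erase.1 hβK
    obtain ⟨hβpos, hβg⟩ := (hDMem β).1 hβD
    have hwβ : dAct w β ∈ C.Pos := by
      rcases hdichw β hβpos with h | h
      · exact h
      · exact absurd ((hInvMem β).2 ⟨hβpos, h⟩) hβInv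
    have hιD : -(dAct g β) ∈ D := (hDMem _).2 ⟨hβg, by rw [dAct_neg, hgg, neg_neg]; exact hβpos⟩
    have hιne : -(dAct g β) ≠ γ := by
      intro hEq
      apply hβne
      apply hinj
      rw [hdgγ, ← hEq, neg_neg]
    refine ⟨?_, Finset.mem_erase.2 ⟨hιne, hιD⟩⟩
    by_contra hcon
    have hιpos : -(dAct g β) ∈ C.Pos := hβg
    have hwι : dAct w (-(dAct g β)) ∈ C.Pos := by
      rcases hdichw _ hιpos with h | h
      · exact h
      · exact absurd ((hInvMem _).2 ⟨hιpos, h⟩) hcon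
    set c : ℝ := β (C.coroot γ) with hcdef
    have hsum : β + -(dAct g β) = c • γ := by
      rw [hgd]
      ext v
      simp only [LinearMap.add_apply, LinearMap.neg_apply, LinearMap.sub_apply,
        LinearMap.smul_apply, smul_eq_mul]
      ring
    have hγv₀ := (hv₀ γ hγ).1
    have hβv₀ := (hv₀ β hβpos).1
    have hιv₀ := (hv₀ _ hιpos).1
    have hcval : β v₀ + (-(dAct g β)) v₀ = c * γ v₀ := by
      have h5 := congrArg (fun f : Dual ℝ V => f v₀) hsum
      simpa using h5
    have hcpos : 0 < c := by nlinarith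
    have hwsum : dAct w β + dAct w (-(dAct g β)) = c • dAct w γ := by
      rw [← dAct_add, ← dAct_smul, hsum]
    have hval2 : dAct w β v₀ + dAct w (-(dAct g β)) v₀ = c * (dAct w γ) v₀ := by
      have h5 := congrArg (fun f : Dual ℝ V => f v₀) hwsum
      simpa using h5
    have hp1 := (hv₀ _ hwβ).1
    have hp2 := (hv₀ _ hwι).1
    have hp3 := (hv₀ _ hinv).1
    rw [LinearMap.neg_apply] at hp3
    nlinarith
  have hKle : (D.erase γ).card ≤ 2 * ((Inv ∩ D.erase γ).card) := by
    have hmaps : ∀ a ∈ D.erase γ,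
        (if a ∈ Inv then (a, true) else (-(dAct g a), false)) ∈
          ((Inv ∩ D.erase γ) ×ˢ (Finset.univ : Finset Bool)) := by
      intro a ha
      by_cases haI : a ∈ Inv
      · rw [if_pos haI]
        exact Finset.mem_product.2 ⟨Finset.mem_inter.2 ⟨haI, ha⟩, Finset.mem_univ _⟩
      · rw [if_neg haI]
        obtain ⟨h1, h3⟩ := hpairInv a ha haI
        exact Finset.mem_product.2 ⟨Finset.mem_inter.2 ⟨h1, h3⟩, Finset.mem_univ _⟩
    have hinjOn : Set.InjOn (fun a => if a ∈ Inv then (a, true) else (-(dAct g a), false))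
        ↑(D.erase γ) := by
      intro a _ b _ hab
      simp only at hab
      by_cases haI : a ∈ Inv <;> by_cases hbI : b ∈ Inv
      · rw [if_pos haI, if_pos hbI] at hab
        exact (Prod.ext_iff.1 hab).1
      · rw [if_pos haI, if_neg hbI] at hab
        exact absurd (Prod.ext_iff.1 hab).2 (by simp)
      · rw [if_neg haI, if_pos hbI] at hab
        exact absurd (Prod.ext_iff.1 hab).2 (by simp)
      · rw [if_neg haI, if_neg hbI] at hab
        exact hinj2 (Prod.ext_iff.1 hab).1
    have h6 := Finset.card_le_card_of_injOn _ hmaps hinjOn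
    rwa [Finset.card_product, Finset.card_univ, Fintype.card_bool, mul_comm] at h6
  have hIK : Inv ∩ D.erase γ = (Inv ∩ D).erase γ := by
    ext a
    simp only [Finset.mem_inter, Finset.mem_erase]
    tauto
  have hγID : γ ∈ Inv ∩ D := Finset.mem_inter.2 ⟨hγInv, hγD⟩
  have e1 : (D.erase γ).card = D.card - 1 := Finset.card_erase_of_mem hγD
  have e2 : ((Inv ∩ D).erase γ).card = (Inv ∩ D).card - 1 := Finset.card_erase_of_mem hγID
  have e3 : (Inv \ D).card + (Inv ∩ D).card = Inv.card := Finset.card_sdiff_add_card_inter _ _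
  have e4 : (D \ Inv).card + (D ∩ Inv).card = D.card := Finset.card_sdiff_add_card_inter _ _
  have e5 : (D ∩ Inv).card = (Inv ∩ D).card := by rw [Finset.inter_comm]
  have hDpos : 1 ≤ D.card := Finset.card_pos.2 ⟨γ, hγD⟩
  have hIDpos : 1 ≤ (Inv ∩ D).card := Finset.card_pos.2 ⟨γ, hγID⟩
  rw [hIK, e2] at hKle
  show (C.invSet (w * g)).card < (C.invSet w).card
  rw [hcard1, ← hInvDef]
  omega

end RootSystemCtx
end AuxDev


/-- Let `μ` be a dominant integral coweight, `w₁` a minimal coset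
representative for `μ`, and `w_* ∈ W₀` the element with `−μ + A ⊆ w_*(C)`.  Then
`ℓ(t_{−w₁(μ)}w₁) = ℓ(w₁w_*) + ℓ(w_*⁻¹ t_{−μ})`, where `ℓ(w₁w_*)` is the finite Weyl
group length and the other two are separating-hyperplane counts of the corresponding
affine transformations. -/
theorem affine_length_factorization
    {V : Type*} [AddCommGroup V] [Module ℝ V] [FiniteDimensional ℝ V]
    (C : RootSystemCtx V) (μ : V)
    (hint : C.IsIntegral μ) (hdom : C.IsDominant μ)
    (w₁ : V ≃ₗ[ℝ] V) (hmin : C.IsMinRep w₁ μ)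
    (wstar : V ≃ₗ[ℝ] V) (hws : wstar ∈ C.W)
    (hcham : (fun v => -μ + v) '' C.alcove ⊆ ⇑wstar '' C.chamber) :
    C.affLen (affT (-(w₁ μ)) w₁)
      = C.len (w₁ * wstar) + C.affLen (affT (-(wstar⁻¹ μ)) wstar⁻¹) := by
  classical
  have hw₁ : w₁ ∈ C.W := hmin.1
  set z : Dual ℝ V → ℤ := fun β => if h : β ∈ C.Φ then (hint β h).choose else 0 with hzdef
  have hz : ∀ β ∈ C.Φ, β μ = (z β : ℝ) := by
    intro β hβ
    simp only [hzdef]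
    rw [dif_pos hβ]
    exact (hint β hβ).choose_spec
  have hzpos : ∀ β ∈ C.Pos, 0 ≤ z β := by
    intro β hβ
    have h1 := hdom β hβ
    rw [hz β (C.pos_subset hβ)] at h1
    exact_mod_cast h1
  have hzneg : ∀ δ ∈ C.Φ, -δ ∈ C.Φ → z (-δ) = -z δ := by
    intro δ h1 h2
    have e1 := hz _ h2
    have e2 := hz _ h1
    rw [LinearMap.neg_apply, e2] at e1
    exact_mod_cast e1.symm
  -- classification of w_* from the chamber condition
  have hWc : ∀ β ∈ C.Pos, ∀ v ∈ C.alcove, (0:ℝ) < dAct wstar β v - dAct wstar β μ := by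
    intro β hβ v hv
    obtain ⟨c, hc, hce⟩ := hcham ⟨v, hv, rfl⟩
    have hce' : wstar c = -μ + v := hce
    have hcc : c = wstar.symm (-μ + v) := by rw [← hce', LinearEquiv.symm_apply_apply]
    have hβc := hc β hβ
    rw [hcc] at hβc
    have h6 : (0:ℝ) < dAct wstar β (-μ + v) := hβc
    rw [map_add, map_neg] at h6
    linarith
  have hWpos : ∀ β ∈ C.Pos, dAct wstar β ∈ C.Pos → z (dAct wstar β) = 0 := by
    intro β hβ hp
    have hΦ2 : dAct wstar β ∈ C.Φ := C.pos_subset hp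
    have h1 : ∀ v ∈ C.alcove, ((z (dAct wstar β)):ℝ) < dAct wstar β v := by
      intro v hv
      have h0 := hWc β hβ v hv
      have h3 := hz _ hΦ2
      rw [h3] at h0
      linarith
    have h3 := (C.forall_gt_iff hp _).1 h1
    have h4 := hzpos _ hp
    omega
  have hWneg : ∀ β ∈ C.Pos, -(dAct wstar β) ∈ C.Pos → 1 ≤ z (-(dAct wstar β)) := by
    intro β hβ hp
    have hΦ2 : -(dAct wstar β) ∈ C.Φ := C.pos_subset hp
    have h1 : ∀ v ∈ C.alcove, (-(dAct wstar β)) v < ((z (-(dAct wstar β))):ℝ) := by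
      intro v hv
      have h0 := hWc β hβ v hv
      have h3 := hz _ hΦ2
      rw [LinearMap.neg_apply] at h3
      rw [LinearMap.neg_apply]
      linarith
    exact (C.forall_lt_iff hp _).1 h1
  -- consequence of minimality
  have hM : ∀ β ∈ C.Pos, -(dAct w₁ β) ∈ C.Pos → z β ≠ 0 := by
    intro γ hγ hinv hz0
    have hγΦ := C.pos_subset hγ
    have h2 : γ (C.coroot γ) = 2 := C.coroot_self γ hγΦ
    have hγμ : γ μ = 0 := by
      rw [hz γ hγΦ, hz0]
      norm_num
    set gl : V →ₗ[ℝ] V := LinearMap.id - LinearMap.smulRight γ (C.coroot γ) with hgl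
    have hglapp : ∀ v, gl v = v - γ v • C.coroot γ := fun v => rfl
    have hinvol : Function.Involutive gl := by
      intro v
      rw [hglapp, hglapp]
      have h3 : γ (v - γ v • C.coroot γ) = -γ v := by
        rw [map_sub, map_smul, smul_eq_mul, h2]
        ring
      rw [h3, neg_smul]
      abel
    set g : V ≃ₗ[ℝ] V := LinearEquiv.ofInvolutive gl hinvol with hgdef
    have hgapp : ∀ v, g v = v - γ v • C.coroot γ := fun v => rfl
    have hgW : g ∈ C.W := by
      rw [C.W_gen]
      exact Subgroup.subset_closure ⟨γ, hγΦ, hgapp⟩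
    have hgsymm : ∀ v, g.symm v = v - γ v • C.coroot γ := by
      intro v
      rw [LinearEquiv.symm_apply_eq]
      exact (hinvol v).symm
    have hgd : ∀ β : Dual ℝ V, dAct g β = β - β (C.coroot γ) • γ := by
      intro β
      ext v
      rw [dAct_apply, hgsymm]
      simp only [map_sub, map_smul, smul_eq_mul, LinearMap.sub_apply, LinearMap.smul_apply]
      ring
    have hgμ : g μ = μ := by rw [hgapp, hγμ, zero_smul, sub_zero]
    have hle := hmin.2 g hgW hgμ
    have hlt := C.len_mul_refl_lt hw₁ hγ hgW hgd hinv
    omega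
  -- first affine length
  have hL : C.affLen (affT (-(w₁ μ)) w₁) =
      ∑ β ∈ C.Pos, (if -(dAct w₁ β) ∈ C.Pos then (z β - 1).toNat else (z β).toNat) := by
    have hmz : ∀ α ∈ C.Pos, α (-(w₁ μ)) = ((- z (dAct w₁⁻¹ α) : ℤ) : ℝ) := by
      intro α hα
      have h1 : dAct w₁⁻¹ α ∈ C.Φ := C.dAct_mem_phi (inv_mem hw₁) (C.pos_subset hα)
      have h2 := hz _ h1
      have h3 : dAct w₁⁻¹ α μ = α (w₁ μ) := rfl
      rw [map_neg, ← h3, h2]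
      push_cast
      ring
    rw [C.affLen_eq_sum hw₁ (-(w₁ μ)) (fun α => - z (dAct w₁⁻¹ α)) hmz]
    refine Finset.sum_nbij' (C.aw w₁⁻¹) (C.aw w₁) (fun α hα => C.aw_mem (inv_mem hw₁) hα)
      (fun β hβ => C.aw_mem hw₁ hβ) (fun α hα => C.aw_aw' hα) (fun β hβ => C.aw_aw hβ) ?_
    intro α hα
    have hΦ1 : dAct w₁⁻¹ α ∈ C.Φ := C.dAct_mem_phi (inv_mem hw₁) (C.pos_subset hα)
    by_cases hc : dAct w₁⁻¹ α ∈ C.Pos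
    · rw [if_pos hc, C.aw_of_pos hc]
      have hnot : -(dAct w₁ (dAct w₁⁻¹ α)) ∉ C.Pos := by
        rw [dAct_dAct_inv]
        exact C.neg_not_pos hα
      rw [if_neg hnot]
      have h0 := hzpos _ hc
      omega
    · have hβpos : -(dAct w₁⁻¹ α) ∈ C.Pos := C.neg_pos_of_not_pos hΦ1 hc
      rw [if_neg hc, C.aw_of_neg hc]
      have hmem : -(dAct w₁ (-(dAct w₁⁻¹ α))) ∈ C.Pos := by
        rw [dAct_neg, dAct_dAct_inv, neg_neg]
        exact hα
      rw [if_pos hmem]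
      have hzν : z (dAct w₁⁻¹ α) = - z (-(dAct w₁⁻¹ α)) := by
        have h5 := hzneg _ hΦ1 (C.pos_subset hβpos)
        omega
      have h1 : z (-(dAct w₁⁻¹ α)) ≠ 0 := hM _ hβpos hmem
      have h0 := hzpos _ hβpos
      rw [hzν]
      omega
  -- second affine length
  have hR2 : C.affLen (affT (-(wstar⁻¹ μ)) wstar⁻¹) =
      ∑ β ∈ C.Pos, (z β - 1).toNat := by
    have hws' : wstar⁻¹ ∈ C.W := inv_mem hws
    have hmz : ∀ α ∈ C.Pos, α (-(wstar⁻¹ μ)) = ((- z (dAct wstar α) : ℤ) : ℝ) := by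
      intro α hα
      have h1 : dAct wstar α ∈ C.Φ := C.dAct_mem_phi hws (C.pos_subset hα)
      have h2 := hz _ h1
      have h4 : α (wstar⁻¹ μ) = dAct wstar α μ := rfl
      rw [map_neg, h4, h2]
      push_cast
      ring
    rw [C.affLen_eq_sum hws' (-(wstar⁻¹ μ)) (fun α => - z (dAct wstar α)) hmz]
    simp only [inv_inv]
    refine Finset.sum_nbij' (C.aw wstar) (C.aw wstar⁻¹) (fun α hα => C.aw_mem hws hα)
      (fun β hβ => C.aw_mem hws' hβ) (fun α hα => C.aw_aw hα) (fun β hβ => C.aw_aw' hβ) ?_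
    intro α hα
    by_cases hc : dAct wstar α ∈ C.Pos
    · rw [if_pos hc, C.aw_of_pos hc]
      have h0 := hWpos α hα hc
      omega
    · have hδ : -(dAct wstar α) ∈ C.Pos :=
        C.neg_pos_of_not_pos (C.dAct_mem_phi hws (C.pos_subset hα)) hc
      rw [if_neg hc, C.aw_of_neg hc]
      have h1 := hWneg α hα hδ
      have hzν : z (dAct wstar α) = - z (-(dAct wstar α)) := by
        have h5 := hzneg _ (C.dAct_mem_phi hws (C.pos_subset hα)) (C.pos_subset hδ)
        omega
      rw [hzν]
      omega
  -- the finite Weyl group length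
  have hLen3 : C.len (w₁ * wstar) = ∑ β ∈ C.Pos,
      (if -(dAct w₁ β) ∈ C.Pos then 0 else if 1 ≤ z β then 1 else 0) := by
    show (C.invSet (w₁ * wstar)).card = _
    unfold RootSystemCtx.invSet
    rw [Finset.card_filter]
    refine Finset.sum_nbij' (C.aw wstar) (C.aw wstar⁻¹) (fun α hα => C.aw_mem hws hα)
      (fun β hβ => C.aw_mem (inv_mem hws) hβ) (fun α hα => C.aw_aw hα)
      (fun β hβ => C.aw_aw' hβ) ?_
    intro α hα
    rw [dAct_mul]
    by_cases hc : dAct wstar α ∈ C.Pos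
    · rw [C.aw_of_pos hc]
      have hz0 := hWpos α hα hc
      by_cases hd : -(dAct w₁ (dAct wstar α)) ∈ C.Pos
      · exact absurd hz0 (hM _ hc hd)
      · rw [if_neg hd, if_neg hd, if_neg (by omega : ¬ (1:ℤ) ≤ z (dAct wstar α))]
    · have hδ : -(dAct wstar α) ∈ C.Pos :=
        C.neg_pos_of_not_pos (C.dAct_mem_phi hws (C.pos_subset hα)) hc
      rw [C.aw_of_neg hc]
      have hz1 := hWneg α hα hδ
      have he : dAct w₁ (dAct wstar α) = -(dAct w₁ (-(dAct wstar α))) := by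
        rw [dAct_neg, neg_neg]
      by_cases hd : dAct w₁ (-(dAct wstar α)) ∈ C.Pos
      · rw [he, neg_neg, if_pos hd, if_neg (C.neg_not_pos hd), if_pos hz1]
      · have h2 : -(dAct w₁ (-(dAct wstar α))) ∈ C.Pos :=
          C.neg_pos_of_not_pos (C.dAct_mem_phi hw₁ (C.pos_subset hδ)) hd
        rw [he, neg_neg, if_neg hd, if_pos h2]
  rw [hL, hLen3, hR2, ← Finset.sum_add_distrib]
  refine Finset.sum_congr rfl fun β hβ => ?_
  have h0 := hzpos β hβ
  by_cases hd : -(dAct w₁ β) ∈ C.Pos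
  · rw [if_pos hd, if_pos hd]
    omega
  · rw [if_neg hd, if_neg hd]
    by_cases h1 : 1 ≤ z β
    · rw [if_pos h1]
      omega
    · rw [if_neg h1]
      omega
end
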